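/- arXiv:math/0103194 — 2 statements merged into one kernel-verified Lean document; each statement's English description precedes it below -/
import Mathlib

section
/- (Main theorem, algebraic form) Let n ≥ 2 and let σ_1,…,σ_{n−1} be the standard Artin generators of B_n, and set Δ_n² = (σ_1⋯σ_{n−1})^n. Let a, b ∈ B_n and define H_i = a σ_i a⁻¹ and F_i = b σ_i b⁻¹ for 1 ≤ i ≤ n−1. Then for any indices i_1,…,i_{n(n−1)} and j_1,…,j_{n(n−1)} in {1,…,n−1} such that Δ_n² = F_{i_1}⋯F_{i_{n(n−1)}} = H_{j_1}⋯H_{j_{n(n−1)}} in B_n, the tuples (F_{i_1},…,F_{i_{n(n−1)}}) and (H_{j_1},…,H_{j_{n(n−1)}}) in (B_n)^{n(n−1)} are Hurwitz equivalent. -/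
/-- The braid relators on generators indexed by `Fin n` (so this presents the
braid group on `n + 1` strands): `σᵢσⱼ = σⱼσᵢ` for `|i - j| > 1` and
`σᵢσᵢ₊₁σᵢ = σᵢ₊₁σᵢσᵢ₊₁`. -/
def braidRels (n : ℕ) : Set (FreeGroup (Fin n)) :=
  {r | ∃ i j : Fin n, i.val + 2 ≤ j.val ∧
        r = FreeGroup.of i * FreeGroup.of j * (FreeGroup.of j * FreeGroup.of i)⁻¹} ∪
  {r | ∃ i j : Fin n, i.val + 1 = j.val ∧
        r = FreeGroup.of i * FreeGroup.of j * FreeGroup.of i *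
            (FreeGroup.of j * FreeGroup.of i * FreeGroup.of j)⁻¹}

/-- The braid group with `n` Artin generators, i.e. the braid group `B_{n+1}`
on `n + 1` strands. -/
abbrev BraidGroup (n : ℕ) : Type := PresentedGroup (braidRels n)

/-- The Artin generators (zero-based: `σ 0, …, σ (n-1)` are the paper's
`σ₁, …, σₙ`). -/
def σ {n : ℕ} (i : Fin n) : BraidGroup n := PresentedGroup.of i

/-- A single Hurwitz move `R_k` (the position `k` is encoded by the prefix `u`):
`(…, a, b, …) ↦ (…, a b a⁻¹, a, …)`. -/
def HurwitzMove {G : Type*} [Group G] (l l' : List G) : Prop :=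
  ∃ (u v : List G) (a b : G),
    l = u ++ a :: b :: v ∧ l' = u ++ (a * b * a⁻¹) :: a :: v

/-- Hurwitz equivalence: finite sequences of Hurwitz moves and their inverses. -/
def HurwitzEquiv {G : Type*} [Group G] : List G → List G → Prop :=
  Relation.EqvGen HurwitzMove

/-- `Δₙ² = (σ₁ ⋯ σₙ₋₁)ⁿ`. -/
def DeltaSq (n : ℕ) : BraidGroup (n - 1) :=
  ((List.ofFn fun i : Fin (n - 1) => σ i).prod) ^ n


namespace BraidAux
open List

variable {m : ℕ}

abbrev W (m : ℕ) := List (Fin m)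

def Far (a b : Fin m) : Prop := a.val + 2 ≤ b.val ∨ b.val + 2 ≤ a.val
def Adj (a b : Fin m) : Prop := a.val + 1 = b.val ∨ b.val + 1 = a.val

lemma Far.symm {a b : Fin m} (h : Far a b) : Far b a := h.elim Or.inr Or.inl
lemma Adj.symm {a b : Fin m} (h : Adj a b) : Adj b a := h.elim Or.inr Or.inl
lemma Far.ne {a b : Fin m} (h : Far a b) : a ≠ b := by
  rcases h with h | h <;> (intro e; subst e; omega)
lemma Adj.ne {a b : Fin m} (h : Adj a b) : a ≠ b := by
  rcases h with h | h <;> (intro e; subst e; omega)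
lemma Adj.not_far {a b : Fin m} (h : Adj a b) : ¬ Far a b := by
  rcases h with h | h <;> (rintro (h' | h') <;> omega)

lemma tri (a b : Fin m) : a = b ∨ Adj a b ∨ Far a b := by
  rcases Nat.lt_trichotomy a.val b.val with h | h | h
  · rcases Nat.lt_or_ge (a.val + 1) b.val with h' | h'
    · exact Or.inr (Or.inr (Or.inl (by omega)))
    · exact Or.inr (Or.inl (Or.inl (by omega)))
  · exact Or.inl (Fin.ext h)
  · rcases Nat.lt_or_ge (b.val + 1) a.val with h' | h'
    · exact Or.inr (Or.inr (Or.inr (by omega)))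
    · exact Or.inr (Or.inl (Or.inr (by omega)))

inductive Brel : W m → W m → Prop
  | far (a b : Fin m) (h : a.val + 2 ≤ b.val) : Brel [a,b] [b,a]
  | braid (a b : Fin m) (h : a.val + 1 = b.val) : Brel [a,b,a] [b,a,b]

def Brel' (p q : W m) : Prop := Brel p q ∨ Brel q p

lemma Brel'.symm {p q : W m} (h : Brel' p q) : Brel' q p := h.elim Or.inr Or.inl

inductive BStep : W m → W m → Prop
  | mk (x y p q : W m) (h : Brel' p q) : BStep (x ++ p ++ y) (x ++ q ++ y)

lemma BStep.symm {u v : W m} (h : BStep u v) : BStep v u := by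
  rcases h with ⟨x, y, p, q, h⟩; exact BStep.mk x y q p h.symm

def BEquiv : W m → W m → Prop := Relation.ReflTransGen BStep

@[refl] lemma BEquiv.refl (u : W m) : BEquiv u u := Relation.ReflTransGen.refl

lemma BEquiv.rfl {u : W m} : BEquiv u u := Relation.ReflTransGen.refl

lemma BEquiv.trans {u v w : W m} (h1 : BEquiv u v) (h2 : BEquiv v w) : BEquiv u w :=
  Relation.ReflTransGen.trans h1 h2

lemma BEquiv.symm {u v : W m} (h : BEquiv u v) : BEquiv v u :=
  by
    haveI : Std.Symm (BStep : W m → W m → Prop) := ⟨fun _ _ h => BStep.symm h⟩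
    exact @Std.Symm.symm _ (Relation.ReflTransGen BStep) _ _ _ h

lemma BStep.equiv {u v : W m} (h : BStep u v) : BEquiv u v :=
  Relation.ReflTransGen.single h

lemma Brel.length {p q : W m} (h : Brel p q) : p.length = q.length := by
  cases h <;> rfl

lemma BStep.length {u v : W m} (h : BStep u v) : u.length = v.length := by
  rcases h with ⟨x, y, p, q, h⟩
  have : p.length = q.length := by rcases h with h | h; exacts [h.length, h.length.symm]
  simp [this]

lemma BEquiv.length {u v : W m} (h : BEquiv u v) : u.length = v.length := by
  induction h with
  | refl => rfl
  | tail _ h2 ih => exact ih.trans h2.length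

lemma BStep.append_right {u v : W m} (t : W m) (h : BStep u v) : BStep (u ++ t) (v ++ t) := by
  rcases h with ⟨x, y, p, q, h⟩
  have e1 : x ++ p ++ y ++ t = x ++ p ++ (y ++ t) := by simp
  have e2 : x ++ q ++ y ++ t = x ++ q ++ (y ++ t) := by simp
  rw [e1, e2]; exact BStep.mk x (y ++ t) p q h

lemma BStep.append_left {u v : W m} (t : W m) (h : BStep u v) : BStep (t ++ u) (t ++ v) := by
  rcases h with ⟨x, y, p, q, h⟩
  have e1 : t ++ (x ++ p ++ y) = t ++ x ++ p ++ y := by simp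
  have e2 : t ++ (x ++ q ++ y) = t ++ x ++ q ++ y := by simp
  rw [e1, e2]; exact BStep.mk (t ++ x) y p q h

lemma BEquiv.append_right {u v : W m} (t : W m) (h : BEquiv u v) : BEquiv (u ++ t) (v ++ t) := by
  induction h with
  | refl => exact BEquiv.rfl
  | tail _ h2 ih => exact ih.trans (h2.append_right t).equiv

lemma BEquiv.append_left {u v : W m} (t : W m) (h : BEquiv u v) : BEquiv (t ++ u) (t ++ v) := by
  induction h with
  | refl => exact BEquiv.rfl
  | tail _ h2 ih => exact ih.trans (h2.append_left t).equiv

lemma BEquiv.cons_congr (x : Fin m) {u v : W m} (h : BEquiv u v) : BEquiv (x :: u) (x :: v) := by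
  have := h.append_left [x]; simpa using this

lemma BEquiv.append_congr {u v u' v' : W m} (h : BEquiv u u') (h' : BEquiv v v') :
    BEquiv (u ++ v) (u' ++ v') :=
  (h.append_right v).trans (h'.append_left u')

/-- single far swap with a tail -/
lemma swap {a b : Fin m} (h : Far a b) (t : W m) : BEquiv (a :: b :: t) (b :: a :: t) := by
  rcases h with h | h
  · have := (BStep.mk ([] : W m) t [a,b] [b,a] (Or.inl (Brel.far a b h))).equiv
    simpa using this
  · have := (BStep.mk ([] : W m) t [b,a] [a,b] (Or.inl (Brel.far b a h))).equiv
    exact (by simpa using this : BEquiv (b :: a :: t) (a :: b :: t)).symm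

lemma braid {a b : Fin m} (h : Adj a b) (t : W m) :
    BEquiv (a :: b :: a :: t) (b :: a :: b :: t) := by
  rcases h with h | h
  · have := (BStep.mk ([] : W m) t [a,b,a] [b,a,b] (Or.inl (Brel.braid a b h))).equiv
    simpa using this
  · have := (BStep.mk ([] : W m) t [b,a,b] [a,b,a] (Or.inl (Brel.braid b a h))).equiv
    exact (by simpa using this : BEquiv (b :: a :: b :: t) (a :: b :: a :: t)).symm

/-- commute a letter with a whole word, all of whose letters are far from it -/
lemma swap_word {c : Fin m} {L : W m} (h : ∀ y ∈ L, Far c y) (t : W m) :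
    BEquiv (L ++ c :: t) (c :: (L ++ t)) := by
  induction L generalizing t with
  | nil => simpa using BEquiv.rfl
  | cons x L ih =>
    have hx : Far c x := h x (by simp)
    have hL : ∀ y ∈ L, Far c y := fun y hy => h y (by simp [hy])
    have h1 : BEquiv (x :: (L ++ c :: t)) (x :: c :: (L ++ t)) := (ih hL t).cons_congr x
    have h2 : BEquiv (x :: c :: (L ++ t)) (c :: x :: (L ++ t)) := swap hx.symm (L ++ t)
    simpa using h1.trans h2




inductive ChainN : ℕ → W m → W m → Prop
  | zero (u : W m) : ChainN 0 u u
  | succ {N : ℕ} {u v w : W m} : BStep u v → ChainN N v w → ChainN (N+1) u w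

lemma ChainN.equiv {N : ℕ} {u v : W m} (h : ChainN N u v) : BEquiv u v := by
  induction h with
  | zero => exact BEquiv.rfl
  | succ h1 _ ih => exact h1.equiv.trans ih

lemma ChainN.snoc {N : ℕ} {u v w : W m} (h : ChainN N u v) (h2 : BStep v w) :
    ChainN (N+1) u w := by
  induction h with
  | zero => exact ChainN.succ h2 (ChainN.zero _)
  | succ h1 _ ih => exact ChainN.succ h1 (ih h2)

lemma BEquiv.chain {u v : W m} (h : BEquiv u v) : ∃ N, ChainN N u v := by
  induction h with
  | refl => exact ⟨0, ChainN.zero _⟩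
  | tail _ h2 ih => rcases ih with ⟨N, hN⟩; exact ⟨N+1, hN.snoc h2⟩

def comp (a b : Fin m) : W m :=
  if a = b then [] else if a.val + 1 = b.val ∨ b.val + 1 = a.val then [b, a] else [b]

lemma comp_self (a : Fin m) : comp a a = [] := by simp [comp]

lemma comp_adj {a b : Fin m} (h : Adj a b) : comp a b = [b, a] := by
  have h' : a.val + 1 = b.val ∨ b.val + 1 = a.val := h
  simp [comp, h.ne, h']

lemma comp_far {a b : Fin m} (h : Far a b) : comp a b = [b] := by
  have : ¬ (a.val + 1 = b.val ∨ b.val + 1 = a.val) := fun h' => Adj.not_far h' h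
  simp [comp, h.ne, this]

/-- the two head-extensions of the lcm agree -/
lemma lcm_equiv (a b : Fin m) : BEquiv (a :: comp a b) (b :: comp b a) := by
  rcases tri a b with h | h | h
  · subst h; rw [comp_self]
  · rw [comp_adj h, comp_adj h.symm]; exact braid h []
  · rw [comp_far h, comp_far h.symm]; exact swap h []

lemma BStep.decomp {u v : W m} (h : BStep u v) :
    ∃ x y p q, Brel' p q ∧ u = x ++ p ++ y ∧ v = x ++ q ++ y := by
  rcases h with ⟨x, y, p, q, h⟩; exact ⟨x, y, p, q, h, rfl, rfl⟩

/-- decompose a step whose source is `a :: u` -/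
lemma head_step {a : Fin m} {u w : W m} (h : BStep (a :: u) w) :
    (∃ u', w = a :: u' ∧ BStep u u') ∨
    (∃ c y, u = c :: y ∧ Far a c ∧ w = c :: a :: y) ∨
    (∃ c y, u = c :: a :: y ∧ Adj a c ∧ w = c :: a :: c :: y) := by
  obtain ⟨x, y, p, q, hpq, heq, hv⟩ := h.decomp
  cases x with
  | cons x₀ x' =>
    obtain ⟨rfl, rfl⟩ : x₀ = a ∧ x' ++ p ++ y = u := by
      constructor
      · simpa using congrArg (fun l => l.head?) heq.symm
      · simpa using congrArg (fun l => l.tail) heq.symm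
    left
    exact ⟨x' ++ q ++ y, by simp [hv], BStep.mk x' y p q hpq⟩
  | nil =>
    simp only [List.nil_append] at heq hv
    rcases hpq with h | h
    · cases h with
      | far c d hcd =>
        obtain ⟨rfl, rfl⟩ : c = a ∧ d :: y = u := by
          constructor
          · simpa using congrArg (fun l => l.head?) heq.symm
          · simpa using congrArg (fun l => l.tail) heq.symm
        exact Or.inr (Or.inl ⟨d, y, rfl, Or.inl hcd, by simp [hv]⟩)
      | braid c d hcd =>
        obtain ⟨rfl, rfl⟩ : c = a ∧ d :: c :: y = u := by
          constructor
          · simpa using congrArg (fun l => l.head?) heq.symm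
          · simpa using congrArg (fun l => l.tail) heq.symm
        exact Or.inr (Or.inr ⟨d, y, rfl, Or.inl hcd, by simp [hv]⟩)
    · cases h with
      | far c d hcd =>
        obtain ⟨rfl, rfl⟩ : d = a ∧ c :: y = u := by
          constructor
          · simpa using congrArg (fun l => l.head?) heq.symm
          · simpa using congrArg (fun l => l.tail) heq.symm
        exact Or.inr (Or.inl ⟨c, y, rfl, Or.inr hcd, by simp [hv]⟩)
      | braid c d hcd =>
        obtain ⟨rfl, rfl⟩ : d = a ∧ c :: d :: y = u := by
          constructor
          · simpa using congrArg (fun l => l.head?) heq.symm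
          · simpa using congrArg (fun l => l.tail) heq.symm
        exact Or.inr (Or.inr ⟨c, y, rfl, Or.inr hcd, by simp [hv]⟩)



scoped infix:50 " ≋ " => BraidAux.BEquiv

instance : Trans (BEquiv (m := m)) (BEquiv (m := m)) (BEquiv (m := m)) := ⟨BEquiv.trans⟩

theorem key : ∀ (L N : ℕ) (u v : W m) (a b : Fin m), u.length = L →
    ChainN N (a :: u) (b :: v) →
    ∃ w, BEquiv u (comp a b ++ w) ∧ BEquiv v (comp b a ++ w) := by
  intro L
  induction L using Nat.strong_induction_on with
  | _ L IHL =>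
  intro N
  induction N using Nat.strong_induction_on with
  | _ N IHN =>
  intro u v a b hlen hch
  have KEYLT : ∀ (x y' : Fin m) (s t' : W m), s.length < L → BEquiv (x :: s) (y' :: t') →
      ∃ w, BEquiv s (comp x y' ++ w) ∧ BEquiv t' (comp y' x ++ w) := by
    intro x y' s t' hlt h
    obtain ⟨N'', ch⟩ := h.chain
    exact IHL s.length hlt N'' s t' x y' rfl ch
  cases hch with
  | zero =>
    exact ⟨u, by simp only [comp_self, List.nil_append]; exact BEquiv.rfl,
      by simp only [comp_self, List.nil_append]; exact BEquiv.rfl⟩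
  | @succ N₀ _ t _ hstep hch' =>
    rcases head_step hstep with ⟨u', rfl, hst⟩ | ⟨c, y, rfl, hac, rfl⟩ | ⟨c, y, rfl, hac, rfl⟩
    · -- Case A : step inside the tail
      obtain ⟨w, h1, h2⟩ := IHN N₀ (Nat.lt_succ_self _) u' v a b
        (by rw [← hst.length]; exact hlen) hch'
      exact ⟨w, hst.equiv.trans h1, h2⟩
    · -- Case B : far head move, u = c :: y, Far a c
      have hyL : y.length + 1 = L := by simpa using hlen
      obtain ⟨w₁, B1, B2⟩ := IHN N₀ (Nat.lt_succ_self _) (a :: y) v c b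
        (by simp only [List.length_cons]; omega) hch'
      by_cases hbceq : b = c
      · -- B-i
        subst hbceq
        rw [comp_self, List.nil_append] at B1 B2
        rw [comp_far hac, comp_far hac.symm]
        simp only [List.cons_append, List.nil_append]
        exact ⟨y, BEquiv.rfl, B2.trans B1.symm⟩
      · by_cases hab : a = b
        · -- B-ii
          subst hab
          rw [comp_far hac.symm] at B1
          simp only [List.cons_append, List.nil_append] at B1
          obtain ⟨w₂, Q1, Q2⟩ := KEYLT a a y w₁ (by omega) B1
          rw [comp_self, List.nil_append] at Q1 Q2
          rw [comp_self]
          simp only [List.nil_append]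
          refine ⟨c :: y, BEquiv.rfl, ?_⟩
          rw [comp_far hac] at B2
          simp only [List.cons_append, List.nil_append] at B2
          exact B2.trans ((Q2.trans Q1.symm).cons_congr c)
        · rcases (tri b c).resolve_left hbceq with hbc | hbc
          · -- Adj b c
            rcases (tri a b).resolve_left hab with hab' | hab'
            · -- B: Adj a b, Adj b c, Far a c
              rw [comp_adj hbc.symm] at B1
              simp only [List.cons_append, List.nil_append] at B1
              obtain ⟨w₂, C1, C2⟩ := KEYLT a b y (c :: w₁) (by omega) B1
              rw [comp_adj hab'] at C1
              rw [comp_adj hab'.symm] at C2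
              simp only [List.cons_append, List.nil_append] at C1 C2
              have hw₁ : w₁.length + 2 = L := by
                have := B1.length; simp only [List.length_cons] at this; omega
              obtain ⟨w₃, D1, D2⟩ := KEYLT c a w₁ (b :: w₂) (by omega) C2
              rw [comp_far hac.symm] at D1
              rw [comp_far hac] at D2
              simp only [List.cons_append, List.nil_append] at D1 D2
              have hw₂ : w₂.length + 3 = L := by
                have := C1.length; simp only [List.length_cons] at this; omega
              obtain ⟨w₄, E1, E2⟩ := KEYLT b c w₂ w₃ (by omega) D2
              rw [comp_adj hbc] at E1
              rw [comp_adj hbc.symm] at E2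
              simp only [List.cons_append, List.nil_append] at E1 E2
              rw [comp_adj hab', comp_adj hab'.symm]
              simp only [List.cons_append, List.nil_append]
              refine ⟨c :: b :: a :: w₄, ?_, ?_⟩
              · calc c :: y ≋ c :: b :: a :: w₂ := C1.cons_congr c
                  _ ≋ c :: b :: a :: c :: b :: w₄ :=
                    (((E1.cons_congr a).cons_congr b).cons_congr c)
                  _ ≋ c :: b :: c :: a :: b :: w₄ :=
                    ((swap hac (b :: w₄)).cons_congr b).cons_congr c
                  _ ≋ b :: c :: b :: a :: b :: w₄ := braid hbc.symm (a :: b :: w₄)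
                  _ ≋ b :: c :: a :: b :: a :: w₄ :=
                    ((braid hab'.symm w₄).cons_congr c).cons_congr b
                  _ ≋ b :: a :: c :: b :: a :: w₄ :=
                    (swap hac.symm (b :: a :: w₄)).cons_congr b
              · rw [comp_adj hbc] at B2
                simp only [List.cons_append, List.nil_append] at B2
                calc v ≋ c :: b :: w₁ := B2
                  _ ≋ c :: b :: a :: w₃ := (D1.cons_congr b).cons_congr c
                  _ ≋ c :: b :: a :: b :: c :: w₄ :=
                    ((E2.cons_congr a).cons_congr b).cons_congr c
                  _ ≋ c :: a :: b :: a :: c :: w₄ :=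
                    (braid hab'.symm (c :: w₄)).cons_congr c
                  _ ≋ a :: c :: b :: a :: c :: w₄ := swap hac.symm (b :: a :: c :: w₄)
                  _ ≋ a :: c :: b :: c :: a :: w₄ :=
                    (((swap hac w₄).cons_congr b).cons_congr c).cons_congr a
                  _ ≋ a :: b :: c :: b :: a :: w₄ := (braid hbc.symm (a :: w₄)).cons_congr a
            · -- B: Far a b, Adj b c
              rw [comp_adj hbc.symm] at B1
              simp only [List.cons_append, List.nil_append] at B1
              obtain ⟨w₂, C1, C2⟩ := KEYLT a b y (c :: w₁) (by omega) B1
              rw [comp_far hab'] at C1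
              rw [comp_far hab'.symm] at C2
              simp only [List.cons_append, List.nil_append] at C1 C2
              have hw₁ : w₁.length + 2 = L := by
                have := B1.length; simp only [List.length_cons] at this; omega
              obtain ⟨w₃, D1, D2⟩ := KEYLT c a w₁ w₂
                (by omega) C2
              rw [comp_far hac.symm] at D1
              rw [comp_far hac] at D2
              simp only [List.cons_append, List.nil_append] at D1 D2
              rw [comp_far hab', comp_far hab'.symm]
              simp only [List.cons_append, List.nil_append]
              refine ⟨c :: b :: w₃, ?_, ?_⟩
              · calc c :: y ≋ c :: b :: w₂ := C1.cons_congr c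
                  _ ≋ c :: b :: c :: w₃ := (D2.cons_congr b).cons_congr c
                  _ ≋ b :: c :: b :: w₃ := braid hbc.symm w₃
              · rw [comp_adj hbc] at B2
                simp only [List.cons_append, List.nil_append] at B2
                calc v ≋ c :: b :: w₁ := B2
                  _ ≋ c :: b :: a :: w₃ := (D1.cons_congr b).cons_congr c
                  _ ≋ c :: a :: b :: w₃ := (swap hab'.symm w₃).cons_congr c
                  _ ≋ a :: c :: b :: w₃ := swap hac.symm (b :: w₃)
          · -- Far b c
            rcases (tri a b).resolve_left hab with hab' | hab'
            · -- B: Adj a b, Far b c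
              rw [comp_far hbc.symm] at B1
              simp only [List.cons_append, List.nil_append] at B1
              obtain ⟨w₂, C1, C2⟩ := KEYLT a b y w₁ (by omega) B1
              rw [comp_adj hab'] at C1
              rw [comp_adj hab'.symm] at C2
              simp only [List.cons_append, List.nil_append] at C1 C2
              rw [comp_adj hab', comp_adj hab'.symm]
              simp only [List.cons_append, List.nil_append]
              refine ⟨c :: w₂, ?_, ?_⟩
              · calc c :: y ≋ c :: b :: a :: w₂ := C1.cons_congr c
                  _ ≋ b :: c :: a :: w₂ := swap hbc.symm (a :: w₂)
                  _ ≋ b :: a :: c :: w₂ := (swap hac.symm w₂).cons_congr b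
              · rw [comp_far hbc] at B2
                simp only [List.cons_append, List.nil_append] at B2
                calc v ≋ c :: w₁ := B2
                  _ ≋ c :: a :: b :: w₂ := C2.cons_congr c
                  _ ≋ a :: c :: b :: w₂ := swap hac.symm (b :: w₂)
                  _ ≋ a :: b :: c :: w₂ := (swap hbc.symm w₂).cons_congr a
            · -- B: Far a b, Far b c
              rw [comp_far hbc.symm] at B1
              simp only [List.cons_append, List.nil_append] at B1
              obtain ⟨w₂, C1, C2⟩ := KEYLT a b y w₁ (by omega) B1
              rw [comp_far hab'] at C1
              rw [comp_far hab'.symm] at C2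
              simp only [List.cons_append, List.nil_append] at C1 C2
              rw [comp_far hab', comp_far hab'.symm]
              simp only [List.cons_append, List.nil_append]
              refine ⟨c :: w₂, ?_, ?_⟩
              · calc c :: y ≋ c :: b :: w₂ := C1.cons_congr c
                  _ ≋ b :: c :: w₂ := swap hbc.symm w₂
              · rw [comp_far hbc] at B2
                simp only [List.cons_append, List.nil_append] at B2
                calc v ≋ c :: w₁ := B2
                  _ ≋ c :: a :: w₂ := C2.cons_congr c
                  _ ≋ a :: c :: w₂ := swap hac.symm w₂
    · -- Case C : braid head move, u = c :: a :: y, Adj a c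
      have hyL : y.length + 2 = L := by simpa using hlen
      obtain ⟨w₁, B1, B2⟩ := IHN N₀ (Nat.lt_succ_self _) (a :: c :: y) v c b
        (by simp only [List.length_cons]; omega) hch'
      by_cases hbceq : b = c
      · -- C-i
        subst hbceq
        rw [comp_self, List.nil_append] at B1 B2
        rw [comp_adj hac, comp_adj hac.symm]
        simp only [List.cons_append, List.nil_append]
        exact ⟨y, BEquiv.rfl, B2.trans B1.symm⟩
      · by_cases hab : a = b
        · -- C-ii
          subst hab
          rw [comp_adj hac.symm] at B1
          simp only [List.cons_append, List.nil_append] at B1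
          obtain ⟨w₂, P1, P2⟩ := KEYLT a a (c :: y) (c :: w₁)
            (by simp only [List.length_cons]; omega) B1
          rw [comp_self, List.nil_append] at P1 P2
          obtain ⟨w₃, Q1, Q2⟩ := KEYLT c c y w₁ (by omega) (P1.trans P2.symm)
          rw [comp_self, List.nil_append] at Q1 Q2
          rw [comp_self]
          simp only [List.nil_append]
          refine ⟨c :: a :: y, BEquiv.rfl, ?_⟩
          rw [comp_adj hac] at B2
          simp only [List.cons_append, List.nil_append] at B2
          exact B2.trans (((Q2.trans Q1.symm).cons_congr a).cons_congr c)
        · rcases (tri a b).resolve_left hab with hab' | hab'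
          · rcases (tri b c).resolve_left hbceq with hbc | hbc
            · -- C: Adj a b, Adj b c, Adj a c : impossible
              exfalso
              rcases hab' with h1 | h1 <;> rcases hbc with h2 | h2 <;>
                rcases hac with h3 | h3 <;> omega
            · -- C: Adj a b, Far b c
              rw [comp_far hbc.symm] at B1
              simp only [List.cons_append, List.nil_append] at B1
              obtain ⟨w₂, C1, C2⟩ := KEYLT a b (c :: y) w₁
                (by simp only [List.length_cons]; omega) B1
              rw [comp_adj hab'] at C1
              rw [comp_adj hab'.symm] at C2
              simp only [List.cons_append, List.nil_append] at C1 C2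
              obtain ⟨w₃, D1, D2⟩ := KEYLT c b y (a :: w₂) (by omega) C1
              rw [comp_far hbc.symm] at D1
              rw [comp_far hbc] at D2
              simp only [List.cons_append, List.nil_append] at D1 D2
              have hw₂ : w₂.length + 3 = L := by
                have := C1.length; simp only [List.length_cons] at this; omega
              obtain ⟨w₄, E1, E2⟩ := KEYLT a c w₂ w₃ (by omega) D2
              rw [comp_adj hac] at E1
              rw [comp_adj hac.symm] at E2
              simp only [List.cons_append, List.nil_append] at E1 E2
              rw [comp_adj hab', comp_adj hab'.symm]
              simp only [List.cons_append, List.nil_append]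
              refine ⟨c :: a :: b :: w₄, ?_, ?_⟩
              · calc c :: a :: y ≋ c :: a :: b :: w₃ := (D1.cons_congr a).cons_congr c
                  _ ≋ c :: a :: b :: a :: c :: w₄ :=
                    ((E2.cons_congr b).cons_congr a).cons_congr c
                  _ ≋ c :: b :: a :: b :: c :: w₄ := (braid hab' (c :: w₄)).cons_congr c
                  _ ≋ b :: c :: a :: b :: c :: w₄ := swap hbc.symm (a :: b :: c :: w₄)
                  _ ≋ b :: c :: a :: c :: b :: w₄ :=
                    (((swap hbc w₄).cons_congr a).cons_congr c).cons_congr b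
                  _ ≋ b :: a :: c :: a :: b :: w₄ :=
                    (braid hac.symm (b :: w₄)).cons_congr b
              · rw [comp_far hbc] at B2
                simp only [List.cons_append, List.nil_append] at B2
                calc v ≋ c :: w₁ := B2
                  _ ≋ c :: a :: b :: w₂ := C2.cons_congr c
                  _ ≋ c :: a :: b :: c :: a :: w₄ :=
                    ((E1.cons_congr b).cons_congr a).cons_congr c
                  _ ≋ c :: a :: c :: b :: a :: w₄ :=
                    ((swap hbc (a :: w₄)).cons_congr a).cons_congr c
                  _ ≋ a :: c :: a :: b :: a :: w₄ := braid hac.symm (b :: a :: w₄)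
                  _ ≋ a :: c :: b :: a :: b :: w₄ :=
                    ((braid hab' w₄).cons_congr c).cons_congr a
                  _ ≋ a :: b :: c :: a :: b :: w₄ :=
                    (swap hbc.symm (a :: b :: w₄)).cons_congr a
          · rcases (tri b c).resolve_left hbceq with hbc | hbc
            · -- C: Far a b, Adj b c
              rw [comp_adj hbc.symm] at B1
              simp only [List.cons_append, List.nil_append] at B1
              obtain ⟨w₂, C1, C2⟩ := KEYLT a b (c :: y) (c :: w₁)
                (by simp only [List.length_cons]; omega) B1
              rw [comp_far hab'] at C1
              rw [comp_far hab'.symm] at C2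
              simp only [List.cons_append, List.nil_append] at C1 C2
              have hw₁ : w₁.length + 2 = L := by
                have := B1.length; simp only [List.length_cons] at this; omega
              obtain ⟨w₃, D1, D2⟩ := KEYLT c a w₁ w₂ (by omega) C2
              rw [comp_adj hac.symm] at D1
              rw [comp_adj hac] at D2
              simp only [List.cons_append, List.nil_append] at D1 D2
              obtain ⟨w₄, E1, E2⟩ := KEYLT c b y w₂ (by omega) C1
              rw [comp_adj hbc.symm] at E1
              rw [comp_adj hbc] at E2
              simp only [List.cons_append, List.nil_append] at E1 E2
              have hw₂ : w₂.length + 2 = L := by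
                have := C1.length; simp only [List.length_cons] at this; omega
              have hw₃ : w₃.length + 4 = L := by
                have := D2.length; simp only [List.length_cons] at this; omega
              obtain ⟨w₅, F0a, F0b⟩ := KEYLT c c (a :: w₃) (b :: w₄)
                (by simp only [List.length_cons]; omega) (D2.symm.trans E2)
              rw [comp_self, List.nil_append] at F0a F0b
              obtain ⟨w₆, F1, F2⟩ := KEYLT a b w₃ w₄ (by omega) (F0a.trans F0b.symm)
              rw [comp_far hab'] at F1
              rw [comp_far hab'.symm] at F2
              simp only [List.cons_append, List.nil_append] at F1 F2
              rw [comp_far hab', comp_far hab'.symm]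
              simp only [List.cons_append, List.nil_append]
              refine ⟨c :: b :: a :: c :: w₆, ?_, ?_⟩
              · calc c :: a :: y ≋ c :: a :: b :: c :: w₄ :=
                    ((E1.cons_congr a).cons_congr c)
                  _ ≋ c :: a :: b :: c :: a :: w₆ :=
                    (((F2.cons_congr c).cons_congr b).cons_congr a).cons_congr c
                  _ ≋ c :: b :: a :: c :: a :: w₆ :=
                    (swap hab' (c :: a :: w₆)).cons_congr c
                  _ ≋ c :: b :: c :: a :: c :: w₆ :=
                    ((braid hac w₆).cons_congr b).cons_congr c
                  _ ≋ b :: c :: b :: a :: c :: w₆ := braid hbc.symm (a :: c :: w₆)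
              · rw [comp_adj hbc] at B2
                simp only [List.cons_append, List.nil_append] at B2
                have main : v ≋ c :: b :: a :: c :: b :: w₆ := by
                  calc v ≋ c :: b :: w₁ := B2
                    _ ≋ c :: b :: a :: c :: w₃ := (D1.cons_congr b).cons_congr c
                    _ ≋ c :: b :: a :: c :: b :: w₆ :=
                      (((F1.cons_congr c).cons_congr a).cons_congr b).cons_congr c
                have tgt : a :: c :: b :: a :: c :: w₆ ≋ c :: b :: a :: c :: b :: w₆ := by
                  calc a :: c :: b :: a :: c :: w₆ ≋ a :: c :: a :: b :: c :: w₆ :=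
                      ((swap hab'.symm (c :: w₆)).cons_congr c).cons_congr a
                    _ ≋ c :: a :: c :: b :: c :: w₆ := braid hac (b :: c :: w₆)
                    _ ≋ c :: a :: b :: c :: b :: w₆ :=
                      ((braid hbc.symm w₆).cons_congr a).cons_congr c
                    _ ≋ c :: b :: a :: c :: b :: w₆ :=
                      (swap hab' (c :: b :: w₆)).cons_congr c
                exact main.trans tgt.symm
            · -- C: Far a b, Far b c
              rw [comp_far hbc.symm] at B1
              simp only [List.cons_append, List.nil_append] at B1
              obtain ⟨w₂, C1, C2⟩ := KEYLT a b (c :: y) w₁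
                (by simp only [List.length_cons]; omega) B1
              rw [comp_far hab'] at C1
              rw [comp_far hab'.symm] at C2
              simp only [List.cons_append, List.nil_append] at C1 C2
              obtain ⟨w₃, D1, D2⟩ := KEYLT c b y w₂ (by omega) C1
              rw [comp_far hbc.symm] at D1
              rw [comp_far hbc] at D2
              simp only [List.cons_append, List.nil_append] at D1 D2
              rw [comp_far hab', comp_far hab'.symm]
              simp only [List.cons_append, List.nil_append]
              refine ⟨c :: a :: w₃, ?_, ?_⟩
              · calc c :: a :: y ≋ c :: a :: b :: w₃ := (D1.cons_congr a).cons_congr c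
                  _ ≋ c :: b :: a :: w₃ := (swap hab' w₃).cons_congr c
                  _ ≋ b :: c :: a :: w₃ := swap hbc.symm (a :: w₃)
              · rw [comp_far hbc] at B2
                simp only [List.cons_append, List.nil_append] at B2
                calc v ≋ c :: w₁ := B2
                  _ ≋ c :: a :: w₂ := C2.cons_congr c
                  _ ≋ c :: a :: c :: w₃ := (D2.cons_congr a).cons_congr c
                  _ ≋ a :: c :: a :: w₃ := braid hac.symm w₃



lemma cancel_head {a : Fin m} {u v : W m} (h : BEquiv (a :: u) (a :: v)) : BEquiv u v := by
  obtain ⟨N, ch⟩ := h.chain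
  obtain ⟨w, h1, h2⟩ := key u.length N u v a a rfl ch
  rw [comp_self, List.nil_append] at h1 h2
  exact h1.trans h2.symm

lemma cancel_left : ∀ (p : W m) {u v : W m}, BEquiv (p ++ u) (p ++ v) → BEquiv u v := by
  intro p
  induction p with
  | nil => intro u v h; simpa using h
  | cons x p ih =>
    intro u v h
    exact ih (cancel_head (by simpa using h))

open Fin.NatCast

section Rung
variable [NeZero m]

/-- the word `σ_a σ_(a+1) ⋯ σ_(b-1)` (as naturals, cast into `Fin m`) -/
def rung (a b : ℕ) : W m := (List.range' a (b - a)).map (Nat.cast)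

lemma rung_append {a b c : ℕ} (hab : a ≤ b) (hbc : b ≤ c) :
    (rung a c : W m) = rung a b ++ rung b c := by
  unfold rung
  rw [← List.map_append]
  congr 1
  have : List.range' a (b - a) ++ List.range' (a + (b - a)) (c - b) =
      List.range' a (b - a + (c - b)) := List.range'_append_1
  rw [Nat.add_sub_cancel' hab] at this
  rw [this]
  congr 1
  omega

lemma rung_single {a : ℕ} : (rung a (a+1) : W m) = [(a : Fin m)] := by
  unfold rung
  simp

lemma rung_pair {a : ℕ} : (rung a (a+2) : W m) = [(a : Fin m), ((a+1 : ℕ) : Fin m)] := by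
  unfold rung
  norm_num [List.range']

lemma rung_mem {a b : ℕ} (hb : b ≤ m) {y : Fin m} (hy : y ∈ (rung a b : W m)) :
    a ≤ y.val ∧ y.val < b := by
  unfold rung at hy
  obtain ⟨i, hi, rfl⟩ := List.mem_map.1 hy
  rw [List.mem_range'] at hi
  obtain ⟨k, hk, rfl⟩ := hi
  rw [Fin.val_cast_of_lt (by omega)]
  omega

/-- the standard generator word `C = σ_0 ⋯ σ_{m-1}` -/
def Cword : W m := rung 0 m

def Cpow : ℕ → W m
  | 0 => []
  | k + 1 => Cword ++ Cpow k

lemma Cpow_add (j k : ℕ) : (Cpow (j + k) : W m) = Cpow j ++ Cpow k := by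
  induction j with
  | zero => simp [Cpow]
  | succ j ih =>
    have : j + 1 + k = (j + k) + 1 := by omega
    rw [this]
    show (Cword ++ Cpow (j + k) : W m) = (Cword ++ Cpow j) ++ Cpow k
    rw [ih, List.append_assoc]

lemma Cpow_succ_r (k : ℕ) : (Cpow (k+1) : W m) = Cpow k ++ Cword := by
  rw [Cpow_add k 1]
  show Cpow k ++ (Cword ++ Cpow 0) = Cpow k ++ Cword
  simp [Cpow]

/-- `C σ_t ≋ σ_(t+1) C` -/
lemma M1 {t : ℕ} (h : t + 1 < m) :
    BEquiv (Cword ++ [(t : Fin m)]) (((t+1 : ℕ) : Fin m) :: Cword) := by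
  have hdec : (Cword : W m) = rung 0 t ++ ([(t : Fin m), ((t+1:ℕ) : Fin m)] ++ rung (t+2) m) := by
    rw [Cword, rung_append (show (0:ℕ) ≤ t by omega) (show t ≤ m by omega),
        rung_append (show t ≤ t + 2 by omega) (show t + 2 ≤ m by omega), rung_pair]
  set x := (t : Fin m) with hx
  set x1 := ((t+1 : ℕ) : Fin m) with hx1
  set R := (rung (t+2) m : W m) with hR
  set Lo := (rung 0 t : W m) with hLo
  have hfar1 : ∀ y ∈ R, Far x y := by
    intro y hy
    obtain ⟨h1, h2⟩ := rung_mem (le_refl m) hy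
    left
    rw [hx, Fin.val_cast_of_lt (by omega)]
    omega
  have hfar2 : ∀ y ∈ Lo, Far x1 y := by
    intro y hy
    obtain ⟨h1, h2⟩ := rung_mem (show t ≤ m by omega) hy
    right
    rw [hx1, Fin.val_cast_of_lt (by omega)]
    omega
  have hadj : Adj x x1 := by
    left
    rw [hx, hx1, Fin.val_cast_of_lt (show t < m by omega),
      Fin.val_cast_of_lt (show t + 1 < m by omega)]
  have s1 : BEquiv (R ++ [x]) (x :: R) := by simpa using swap_word hfar1 ([] : W m)
  have s2 : BEquiv (Lo ++ (x :: x1 :: (R ++ [x]))) (Lo ++ (x :: x1 :: x :: R)) :=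
    BEquiv.append_left Lo ((s1.cons_congr x1).cons_congr x)
  have s3 : BEquiv (Lo ++ (x :: x1 :: x :: R)) (Lo ++ (x1 :: x :: x1 :: R)) :=
    BEquiv.append_left Lo (braid hadj R)
  have s4 : BEquiv (Lo ++ (x1 :: x :: x1 :: R)) (x1 :: (Lo ++ (x :: x1 :: R))) :=
    swap_word hfar2 _
  have e1 : Cword ++ [x] = Lo ++ (x :: x1 :: (R ++ [x])) := by
    rw [hdec]; simp
  have e2 : x1 :: Cword = x1 :: (Lo ++ (x :: x1 :: R)) := by
    rw [hdec]; simp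
  rw [e1, e2]
  exact (s2.trans s3).trans s4

end Rung

section Rung2
variable [NeZero m]

lemma CP1 {t j : ℕ} (h : t + j < m) :
    BEquiv (Cpow j ++ [(t : Fin m)]) (((t + j : ℕ) : Fin m) :: Cpow j) := by
  induction j with
  | zero => simpa [Cpow] using BEquiv.rfl
  | succ j ih =>
    have ih' := ih (by omega)
    calc (Cpow (j+1) : W m) ++ [(t : Fin m)]
        = Cword ++ (Cpow j ++ [(t : Fin m)]) := by simp [Cpow]
      _ ≋ Cword ++ (((t + j : ℕ) : Fin m) :: Cpow j) := BEquiv.append_left _ ih'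
      _ = (Cword ++ [((t + j : ℕ) : Fin m)]) ++ Cpow j := by simp
      _ ≋ (((t + j + 1 : ℕ) : Fin m) :: Cword) ++ Cpow j :=
          BEquiv.append_right _ (M1 (by omega))
      _ = ((t + (j+1) : ℕ) : Fin m) :: Cpow (j+1) := by
          rw [show t + j + 1 = t + (j+1) by omega]; simp [Cpow]

lemma claim2 : ∀ k : ℕ, k < m →
    BEquiv ((rung 0 (k+1) ++ rung 0 (k+1)) ++ [((k:ℕ) : Fin m)])
      (((0:ℕ) : Fin m) :: (rung 0 (k+1) ++ rung 0 (k+1))) := by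
  intro k
  induction k with
  | zero =>
    intro _
    simp only [rung_single, Nat.cast_zero]
    exact BEquiv.rfl
  | succ k ih =>
    intro h
    have ih := ih (by omega)
    have hsplit : (rung 0 (k+1+1) : W m) = rung 0 (k+1) ++ [((k+1:ℕ) : Fin m)] := by
      rw [rung_append (show (0:ℕ) ≤ k+1 by omega) (show k+1 ≤ k+1+1 by omega), rung_single]
    have hsplit2 : (rung 0 (k+1) : W m) = rung 0 k ++ [((k:ℕ) : Fin m)] := by
      rw [rung_append (show (0:ℕ) ≤ k by omega) (show k ≤ k+1 by omega), rung_single]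
    set a := ((k:ℕ) : Fin m) with ha
    set b := ((k+1:ℕ) : Fin m) with hb
    set L := (rung 0 k : W m) with hL
    have hadj : Adj b a := by
      right
      rw [ha, hb, Fin.val_cast_of_lt (show k < m by omega),
        Fin.val_cast_of_lt (show k + 1 < m by omega)]
    have hfarL : ∀ y ∈ L, Far b y := by
      intro y hy
      obtain ⟨h1, h2⟩ := rung_mem (show k ≤ m by omega) hy
      right
      rw [hb, Fin.val_cast_of_lt (show k + 1 < m by omega)]
      omega
    -- left chain
    have s1 : BEquiv (L ++ (a :: b :: (L ++ (a :: b :: b :: []))))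
        (L ++ (a :: (L ++ (b :: a :: b :: b :: [])))) :=
      BEquiv.append_left L (((swap_word hfarL (a :: b :: b :: [])).symm).cons_congr a)
    have s2 : BEquiv (L ++ (a :: (L ++ (b :: a :: b :: b :: []))))
        (L ++ (a :: (L ++ (a :: b :: a :: b :: [])))) :=
      BEquiv.append_left L ((BEquiv.append_left L (braid hadj (b :: []))).cons_congr a)
    have s3 : BEquiv (L ++ (a :: (L ++ (a :: b :: a :: b :: []))))
        (L ++ (a :: (L ++ (a :: a :: b :: a :: [])))) :=
      BEquiv.append_left L ((BEquiv.append_left L ((braid hadj ([] : W m)).cons_congr a)).cons_congr a)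
    have e1 : (L ++ (a :: (L ++ (a :: a :: b :: a :: []))))
        = ((rung 0 (k+1) ++ rung 0 (k+1)) ++ [a]) ++ (b :: a :: []) := by
      rw [hsplit2]
      simp only [List.append_assoc, List.singleton_append, List.cons_append, List.nil_append]
    have s4 : BEquiv (((rung 0 (k+1) ++ rung 0 (k+1)) ++ [a]) ++ (b :: a :: []))
        ((((0:ℕ) : Fin m) :: (rung 0 (k+1) ++ rung 0 (k+1))) ++ (b :: a :: [])) :=
      BEquiv.append_right _ ih
    -- right chain
    have t1 : BEquiv (((0:ℕ) : Fin m) :: (L ++ (a :: b :: (L ++ (a :: b :: [])))))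
        (((0:ℕ) : Fin m) :: (L ++ (a :: (L ++ (b :: a :: b :: []))))) :=
      (BEquiv.append_left L (((swap_word hfarL (a :: b :: [])).symm).cons_congr a)).cons_congr _
    have t2 : BEquiv (((0:ℕ) : Fin m) :: (L ++ (a :: (L ++ (b :: a :: b :: [])))))
        (((0:ℕ) : Fin m) :: (L ++ (a :: (L ++ (a :: b :: a :: []))))) :=
      (BEquiv.append_left L ((BEquiv.append_left L (braid hadj ([] : W m))).cons_congr a)).cons_congr _
    -- assemble
    have eL : ((rung 0 (k+1+1) ++ rung 0 (k+1+1)) ++ [((k+1:ℕ) : Fin m)])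
        = L ++ (a :: b :: (L ++ (a :: b :: b :: []))) := by
      rw [hsplit, hsplit2]
      simp only [List.append_assoc, List.singleton_append, List.cons_append, List.nil_append]
      rfl
    have eR : (((0:ℕ) : Fin m) :: (rung 0 (k+1+1) ++ rung 0 (k+1+1)))
        = ((0:ℕ) : Fin m) :: (L ++ (a :: b :: (L ++ (a :: b :: [])))) := by
      rw [hsplit, hsplit2]
      simp only [List.append_assoc, List.singleton_append, List.cons_append, List.nil_append]
    have eMid : ((((0:ℕ) : Fin m) :: (rung 0 (k+1) ++ rung 0 (k+1))) ++ (b :: a :: []))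
        = ((0:ℕ) : Fin m) :: (L ++ (a :: (L ++ (a :: b :: a :: [])))) := by
      rw [hsplit2]
      simp only [List.append_assoc, List.singleton_append, List.cons_append, List.nil_append]
    rw [eL, eR]
    refine (((s1.trans s2).trans s3).trans ?_).trans (t1.trans t2).symm
    rw [e1]
    rw [eMid] at s4
    exact s4

lemma M2 : BEquiv ((Cpow 2 : W m) ++ [((m - 1 : ℕ) : Fin m)]) (((0:ℕ) : Fin m) :: Cpow 2) := by
  have h1 : (1:ℕ) ≤ m := Nat.one_le_iff_ne_zero.2 (NeZero.ne m)
  have := claim2 (m := m) (m - 1) (by omega)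
  rw [show m - 1 + 1 = m by omega] at this
  have e : (Cpow 2 : W m) = rung 0 m ++ rung 0 m := by simp [Cpow, Cword]
  rw [e]
  exact this

lemma zcomm_letter (t : Fin m) :
    BEquiv ((Cpow (m+1) : W m) ++ [t]) (t :: Cpow (m+1)) := by
  have htv : t.val < m := t.isLt
  have hdec : (Cpow (m+1) : W m) = Cpow t.val ++ (Cpow 2 ++ Cpow (m - 1 - t.val)) := by
    rw [show m + 1 = t.val + (2 + (m - 1 - t.val)) by omega, Cpow_add, Cpow_add]
  have step1 : BEquiv ((Cpow (m - 1 - t.val) : W m) ++ [t])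
      (((m - 1 : ℕ) : Fin m) :: Cpow (m - 1 - t.val)) := by
    have := CP1 (m := m) (t := t.val) (j := m - 1 - t.val) (by omega)
    rw [show t.val + (m - 1 - t.val) = m - 1 by omega, Fin.cast_val_eq_self] at this
    exact this
  have step3 : BEquiv ((Cpow t.val : W m) ++ [((0:ℕ) : Fin m)]) (t :: Cpow t.val) := by
    have := CP1 (m := m) (t := 0) (j := t.val) (by omega)
    rw [show 0 + t.val = t.val by omega, Fin.cast_val_eq_self] at this
    exact this
  calc (Cpow (m+1) : W m) ++ [t]
      = Cpow t.val ++ (Cpow 2 ++ (Cpow (m - 1 - t.val) ++ [t])) := by rw [hdec]; simp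
    _ ≋ Cpow t.val ++ (Cpow 2 ++ (((m - 1 : ℕ) : Fin m) :: Cpow (m - 1 - t.val))) :=
        BEquiv.append_left _ (BEquiv.append_left _ step1)
    _ = Cpow t.val ++ ((Cpow 2 ++ [((m - 1 : ℕ) : Fin m)]) ++ Cpow (m - 1 - t.val)) := by simp
    _ ≋ Cpow t.val ++ ((((0:ℕ) : Fin m) :: Cpow 2) ++ Cpow (m - 1 - t.val)) :=
        BEquiv.append_left _ (BEquiv.append_right _ M2)
    _ = (Cpow t.val ++ [((0:ℕ) : Fin m)]) ++ (Cpow 2 ++ Cpow (m - 1 - t.val)) := by simp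
    _ ≋ (t :: Cpow t.val) ++ (Cpow 2 ++ Cpow (m - 1 - t.val)) := BEquiv.append_right _ step3
    _ = t :: Cpow (m+1) := by rw [hdec]; simp

lemma zcomm (x : W m) : BEquiv ((Cpow (m+1) : W m) ++ x) (x ++ Cpow (m+1)) := by
  induction x with
  | nil => simpa using BEquiv.rfl
  | cons t x ih =>
    calc (Cpow (m+1) : W m) ++ (t :: x)
        = (Cpow (m+1) ++ [t]) ++ x := by simp
      _ ≋ (t :: Cpow (m+1)) ++ x := BEquiv.append_right _ (zcomm_letter t)
      _ = t :: (Cpow (m+1) ++ x) := by simp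
      _ ≋ t :: (x ++ Cpow (m+1)) := ih.cons_congr t
      _ = (t :: x) ++ Cpow (m+1) := by simp

lemma ldiv (t : Fin m) : ∃ U : W m, BEquiv (Cpow (m+1)) (t :: U) := by
  have h1 : (1:ℕ) ≤ m := Nat.one_le_iff_ne_zero.2 (NeZero.ne m)
  have htv : t.val < m := t.isLt
  have hC : (Cword : W m) = [((0:ℕ) : Fin m)] ++ rung 1 m := by
    rw [Cword, rung_append (show (0:ℕ) ≤ 1 by omega) h1, rung_single]
  have hdec : (Cpow (m+1) : W m) = Cpow t.val ++ (Cword ++ Cpow (m - t.val)) := by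
    rw [show m + 1 = t.val + (1 + (m - t.val)) by omega, Cpow_add, Cpow_add]
    simp [Cpow]
  have step : BEquiv ((Cpow t.val : W m) ++ [((0:ℕ) : Fin m)]) (t :: Cpow t.val) := by
    have := CP1 (m := m) (t := 0) (j := t.val) (by omega)
    rw [show 0 + t.val = t.val by omega, Fin.cast_val_eq_self] at this
    exact this
  refine ⟨Cpow t.val ++ (rung 1 m ++ Cpow (m - t.val)), ?_⟩
  calc (Cpow (m+1) : W m)
      = (Cpow t.val ++ [((0:ℕ) : Fin m)]) ++ (rung 1 m ++ Cpow (m - t.val)) := by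
        rw [hdec, hC]; simp
    _ ≋ (t :: Cpow t.val) ++ (rung 1 m ++ Cpow (m - t.val)) := BEquiv.append_right _ step
    _ = t :: (Cpow t.val ++ (rung 1 m ++ Cpow (m - t.val))) := by simp

lemma Rlem : ∀ d : ℕ, d ≤ m - 1 →
    ∃ V : W m, BEquiv (Cpow (d+1)) (V ++ [((m - 1 - d : ℕ) : Fin m)]) := by
  have h1 : (1:ℕ) ≤ m := Nat.one_le_iff_ne_zero.2 (NeZero.ne m)
  intro d
  induction d with
  | zero =>
    intro _
    refine ⟨rung 0 (m-1), ?_⟩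
    have hlast : (rung (m-1) m : W m) = [((m - 1 : ℕ) : Fin m)] := by
      unfold rung
      rw [show m - (m-1) = 1 by omega]
      simp
    have : (Cpow 1 : W m) = rung 0 (m-1) ++ [((m - 1 : ℕ) : Fin m)] := by
      show (Cword ++ [] : W m) = _
      rw [List.append_nil, Cword,
        rung_append (show (0:ℕ) ≤ m - 1 by omega) (show m - 1 ≤ m by omega), hlast]
    rw [this, show m - 1 - 0 = m - 1 by omega]
  | succ d ih =>
    intro h
    obtain ⟨V, hV⟩ := ih (by omega)
    have hM1 : BEquiv ((Cword : W m) ++ [((m - 2 - d : ℕ) : Fin m)])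
        (((m - 1 - d : ℕ) : Fin m) :: Cword) := by
      have := M1 (m := m) (t := m - 2 - d) (by omega)
      rw [show m - 2 - d + 1 = m - 1 - d by omega] at this
      exact this
    refine ⟨V ++ Cword, ?_⟩
    calc (Cpow (d+1+1) : W m) = Cpow (d+1) ++ Cword := Cpow_succ_r _
      _ ≋ (V ++ [((m - 1 - d : ℕ) : Fin m)]) ++ Cword := BEquiv.append_right _ hV
      _ = V ++ (((m - 1 - d : ℕ) : Fin m) :: Cword) := by simp
      _ ≋ V ++ (Cword ++ [((m - 2 - d : ℕ) : Fin m)]) := BEquiv.append_left V hM1.symm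
      _ = (V ++ Cword) ++ [((m - 1 - (d+1) : ℕ) : Fin m)] := by
          rw [show m - 2 - d = m - 1 - (d+1) by omega]; simp

lemma rdiv (t : Fin m) : ∃ V : W m, BEquiv (Cpow (m+1)) (V ++ [t]) := by
  have h1 : (1:ℕ) ≤ m := Nat.one_le_iff_ne_zero.2 (NeZero.ne m)
  have htv : t.val < m := t.isLt
  obtain ⟨V, hV⟩ := Rlem (m := m) (m - 1 - t.val) (by omega)
  rw [show m - 1 - t.val + 1 = m - t.val by omega,
    show m - 1 - (m - 1 - t.val) = t.val by omega, Fin.cast_val_eq_self] at hV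
  refine ⟨Cpow (t.val + 1) ++ V, ?_⟩
  calc (Cpow (m+1) : W m) = Cpow (t.val + 1) ++ Cpow (m - t.val) := by
        rw [show m + 1 = (t.val + 1) + (m - t.val) by omega, Cpow_add]
    _ ≋ Cpow (t.val + 1) ++ (V ++ [t]) := BEquiv.append_left _ hV
    _ = (Cpow (t.val + 1) ++ V) ++ [t] := by simp

end Rung2


section Zpow
variable [NeZero m]

/-- `Z k` is the word `Δ²ᵏ` -/
def Z (k : ℕ) : W m := Cpow ((m+1) * k)

lemma Z_add (k l : ℕ) : (Z (k+l) : W m) = Z k ++ Z l := by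
  unfold Z
  rw [show (m+1) * (k+l) = (m+1)*k + (m+1)*l by ring, Cpow_add]

lemma Z_zero : (Z 0 : W m) = [] := by simp [Z, Cpow]

lemma Z_one : (Z 1 : W m) = Cpow (m+1) := by unfold Z; rw [show (m+1) * 1 = m+1 by ring]

lemma Zcomm (k : ℕ) (x : W m) : BEquiv (Z k ++ x) (x ++ Z k) := by
  induction k with
  | zero => rw [Z_zero]; simpa using BEquiv.rfl
  | succ k ih =>
    have e : (Z (k+1) : W m) = Z k ++ Cpow (m+1) := by rw [Z_add, Z_one]
    calc (Z (k+1) : W m) ++ x = Z k ++ (Cpow (m+1) ++ x) := by rw [e]; simp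
      _ ≋ Z k ++ (x ++ Cpow (m+1)) := BEquiv.append_left _ (zcomm x)
      _ = (Z k ++ x) ++ Cpow (m+1) := by simp
      _ ≋ (x ++ Z k) ++ Cpow (m+1) := BEquiv.append_right _ ih
      _ = x ++ (Z k ++ Cpow (m+1)) := by simp
      _ = x ++ Z (k+1) := by rw [e]

lemma ZZswap (k l : ℕ) : (Z k ++ Z l : W m) = Z l ++ Z k := by
  rw [← Z_add, ← Z_add, Nat.add_comm]

lemma cancel_z_right {k : ℕ} {u v : W m} (h : BEquiv (u ++ Z k) (v ++ Z k)) : BEquiv u v := by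
  have h' : BEquiv (Z k ++ u) (Z k ++ v) :=
    ((Zcomm k u).trans h).trans (Zcomm k v).symm
  exact cancel_left (Z k) h'

/-- fraction relation : `(u, k) ∼ (v, l)` represents `u Δ⁻²ᵏ = v Δ⁻²ˡ` -/
def HRel (x y : W m × ℕ) : Prop := BEquiv (x.1 ++ Z y.2) (y.1 ++ Z x.2)

lemma HRel.refl (x : W m × ℕ) : HRel x x := BEquiv.rfl

lemma HRel.symm' {x y : W m × ℕ} (h : HRel x y) : HRel y x := h.symm

lemma HRel.trans' {x y z : W m × ℕ} (h1 : HRel x y) (h2 : HRel y z) : HRel x z := by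
  unfold HRel at *
  apply cancel_z_right (k := y.2)
  calc (x.1 ++ Z z.2) ++ Z y.2 = (x.1 ++ Z y.2) ++ Z z.2 := by
        rw [List.append_assoc, List.append_assoc, ZZswap]
    _ ≋ (y.1 ++ Z x.2) ++ Z z.2 := BEquiv.append_right _ h1
    _ = (y.1 ++ Z z.2) ++ Z x.2 := by
        rw [List.append_assoc, List.append_assoc, ZZswap]
    _ ≋ (z.1 ++ Z y.2) ++ Z x.2 := BEquiv.append_right _ h2
    _ = (z.1 ++ Z x.2) ++ Z y.2 := by
        rw [List.append_assoc, List.append_assoc, ZZswap]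

end Zpow

variable (m : ℕ) [NeZero m] in
def hsetoid : Setoid (W m × ℕ) := ⟨HRel, HRel.refl, HRel.symm', HRel.trans'⟩

variable (m : ℕ) [NeZero m] in
/-- the localization of the positive braid monoid at the central element `Δ²` -/
def Hq : Type := Quotient (hsetoid m)

section HqMonoid
variable [NeZero m]

def Hq.mk (x : W m × ℕ) : Hq m := Quotient.mk (hsetoid m) x

lemma Hq.sound {x y : W m × ℕ} (h : HRel x y) : Hq.mk x = Hq.mk y := Quotient.sound h

lemma Hq.exact {x y : W m × ℕ} (h : Hq.mk x = Hq.mk y) : HRel x y := Quotient.exact h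

lemma Hq.ind {P : Hq m → Prop} (h : ∀ x, P (Hq.mk x)) : ∀ q, P q := Quotient.ind h

instance : Mul (Hq m) :=
  ⟨Quotient.map₂ (fun x y => (x.1 ++ y.1, x.2 + y.2)) (by
    rintro ⟨u, k⟩ ⟨u', k'⟩ h1 ⟨v, l⟩ ⟨v', l'⟩ h2
    show HRel _ _
    unfold HRel at *
    simp only at h1 h2 ⊢
    calc (u ++ v) ++ Z (k' + l')
        = u ++ ((v ++ Z k') ++ Z l') := by rw [Z_add]; simp [List.append_assoc]
      _ ≋ u ++ ((Z k' ++ v) ++ Z l') :=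
          BEquiv.append_left u (BEquiv.append_right _ (Zcomm k' v).symm)
      _ = (u ++ Z k') ++ (v ++ Z l') := by simp [List.append_assoc]
      _ ≋ (u' ++ Z k) ++ (v' ++ Z l) := BEquiv.append_congr h1 h2
      _ = u' ++ ((Z k ++ v') ++ Z l) := by simp [List.append_assoc]
      _ ≋ u' ++ ((v' ++ Z k) ++ Z l) :=
          BEquiv.append_left u' (BEquiv.append_right _ (Zcomm k v'))
      _ = (u' ++ v') ++ Z (k + l) := by rw [Z_add]; simp [List.append_assoc])⟩

instance : One (Hq m) := ⟨Hq.mk ([], 0)⟩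

lemma Hq.mk_mul (x y : W m × ℕ) :
    (Hq.mk x) * (Hq.mk y) = Hq.mk (x.1 ++ y.1, x.2 + y.2) := rfl

lemma Hq.one_def : (1 : Hq m) = Hq.mk ([], 0) := rfl

instance : Monoid (Hq m) where
  mul_assoc := by
    intro a b c
    induction a using Hq.ind with | _ x =>
    induction b using Hq.ind with | _ y =>
    induction c using Hq.ind with | _ z =>
    simp only [Hq.mk_mul]
    exact congrArg Hq.mk (by rw [List.append_assoc, Nat.add_assoc])
  one_mul := by
    intro a
    induction a using Hq.ind with | _ x =>
    rw [Hq.one_def, Hq.mk_mul]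
    simp
  mul_one := by
    intro a
    induction a using Hq.ind with | _ x =>
    rw [Hq.one_def, Hq.mk_mul]
    simp

/-- the Artin generators as units of `Hq` -/
noncomputable def genUnit (t : Fin m) : (Hq m)ˣ := by
  have hU := Classical.choose_spec (ldiv t)
  have hV := Classical.choose_spec (rdiv t)
  set U := Classical.choose (ldiv t)
  set V := Classical.choose (rdiv t)
  have val_inv : Hq.mk (([t] : W m), 0) * Hq.mk (U, 1) = 1 := by
    rw [Hq.mk_mul, Hq.one_def]
    apply Hq.sound
    show BEquiv (([t] ++ U) ++ Z 0) ([] ++ Z 1)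
    rw [Z_zero, Z_one]
    simpa using hU.symm
  have linv_val : Hq.mk (V, 1) * Hq.mk (([t] : W m), 0) = 1 := by
    rw [Hq.mk_mul, Hq.one_def]
    apply Hq.sound
    show BEquiv ((V ++ [t]) ++ Z 0) ([] ++ Z 1)
    rw [Z_zero, Z_one]
    simpa using hV.symm
  have hVU : Hq.mk (V, 1) = Hq.mk (U, 1) := left_inv_eq_right_inv linv_val val_inv
  exact ⟨Hq.mk (([t] : W m), 0), Hq.mk (U, 1), val_inv, by rw [← hVU]; exact linv_val⟩

lemma genUnit_val (t : Fin m) : ((genUnit t : (Hq m)ˣ) : Hq m) = Hq.mk ([t], 0) := rfl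

end HqMonoid


/-- far generators commute in the braid group -/
lemma sigma_far {i j : Fin m} (h : i.val + 2 ≤ j.val) : σ i * σ j = σ j * σ i := by
  have hr : (FreeGroup.of i * FreeGroup.of j * (FreeGroup.of j * FreeGroup.of i)⁻¹)
      ∈ braidRels m := Or.inl ⟨i, j, h, rfl⟩
  have h1 : (PresentedGroup.mk (braidRels m))
      (FreeGroup.of i * FreeGroup.of j * (FreeGroup.of j * FreeGroup.of i)⁻¹) = 1 :=
    (QuotientGroup.eq_one_iff _).2 (Subgroup.subset_normalClosure hr)
  simp only [map_mul, map_inv] at h1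
  rw [mul_inv_eq_one] at h1
  exact h1

lemma sigma_braid {i j : Fin m} (h : i.val + 1 = j.val) :
    σ i * σ j * σ i = σ j * σ i * σ j := by
  have hr : (FreeGroup.of i * FreeGroup.of j * FreeGroup.of i *
      (FreeGroup.of j * FreeGroup.of i * FreeGroup.of j)⁻¹) ∈ braidRels m :=
    Or.inr ⟨i, j, h, rfl⟩
  have h1 : (PresentedGroup.mk (braidRels m))
      (FreeGroup.of i * FreeGroup.of j * FreeGroup.of i *
        (FreeGroup.of j * FreeGroup.of i * FreeGroup.of j)⁻¹) = 1 :=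
    (QuotientGroup.eq_one_iff _).2 (Subgroup.subset_normalClosure hr)
  simp only [map_mul, map_inv] at h1
  rw [mul_inv_eq_one] at h1
  exact h1

/-- image of a positive word in the braid group -/
def pi (w : W m) : BraidGroup m := (w.map σ).prod

lemma pi_append (u v : W m) : pi (u ++ v) = pi u * pi v := by
  simp [pi]

lemma pi_cons (t : Fin m) (u : W m) : pi (t :: u) = σ t * pi u := by
  simp [pi]

lemma pi_brel {p q : W m} (h : Brel p q) : pi p = pi q := by
  cases h with
  | far a b hab =>
    show ([a, b].map σ).prod = ([b, a].map σ).prod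
    simp only [List.map_cons, List.map_nil, List.prod_cons, List.prod_nil, mul_one]
    exact sigma_far hab
  | braid a b hab =>
    show ([a, b, a].map σ).prod = ([b, a, b].map σ).prod
    simp only [List.map_cons, List.map_nil, List.prod_cons, List.prod_nil, mul_one,
      ← mul_assoc]
    exact sigma_braid hab

lemma pi_step {u v : W m} (h : BStep u v) : pi u = pi v := by
  obtain ⟨x, y, p, q, hpq, rfl, rfl⟩ := h.decomp
  rw [pi_append, pi_append, pi_append, pi_append]
  rcases hpq with h | h
  · rw [pi_brel h]
  · rw [pi_brel h]

lemma pi_equiv {u v : W m} (h : BEquiv u v) : pi u = pi v := by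
  induction h with
  | refl => rfl
  | tail _ h2 ih => exact ih.trans (pi_step h2)

section WithNeZero
variable [NeZero m]

lemma braid_rels_hold :
    ∀ r ∈ braidRels m, FreeGroup.lift (genUnit (m := m)) r = 1 := by
  intro r hr
  rcases hr with ⟨i, j, hij, rfl⟩ | ⟨i, j, hij, rfl⟩
  · simp only [map_mul, map_inv, FreeGroup.lift_apply_of]
    rw [mul_inv_eq_one]
    apply Units.ext
    simp only [Units.val_mul, genUnit_val, Hq.mk_mul]
    apply Hq.sound
    show BEquiv (([i] ++ [j]) ++ Z 0) (([j] ++ [i]) ++ Z 0)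
    rw [Z_zero]
    simpa using swap (Or.inl hij) ([] : W m)
  · simp only [map_mul, map_inv, FreeGroup.lift_apply_of]
    rw [mul_inv_eq_one]
    apply Units.ext
    simp only [Units.val_mul, genUnit_val, Hq.mk_mul]
    apply Hq.sound
    show BEquiv ((([i] ++ [j]) ++ [i]) ++ Z 0) ((([j] ++ [i]) ++ [j]) ++ Z 0)
    rw [Z_zero]
    simpa using braid (Or.inl hij) ([] : W m)

/-- the canonical homomorphism from the braid group to the units of `Hq` -/
noncomputable def Φ : BraidGroup m →* (Hq m)ˣ := PresentedGroup.toGroup braid_rels_hold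

lemma Φ_sigma (t : Fin m) : Φ (σ t) = genUnit t := by
  show Φ (PresentedGroup.of t) = genUnit t
  exact PresentedGroup.toGroup.of braid_rels_hold

lemma phi_pi (u : W m) : ((Φ (pi u) : (Hq m)ˣ) : Hq m) = Hq.mk (u, 0) := by
  induction u with
  | nil =>
    rw [show pi ([] : W m) = 1 from by simp [pi], map_one, Units.val_one, Hq.one_def]
  | cons t u ih =>
    rw [pi_cons, map_mul, Units.val_mul, Φ_sigma, genUnit_val, ih, Hq.mk_mul]
    rfl

/-- THE injectivity statement : positive words equal in the braid group
are positively equivalent -/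
theorem pi_inj {u v : W m} (h : pi u = pi v) : BEquiv u v := by
  have h2 := congrArg (fun g : BraidGroup m => ((Φ g : (Hq m)ˣ) : Hq m)) h
  simp only [phi_pi] at h2
  have h3 := Hq.exact h2
  unfold HRel at h3
  rw [Z_zero] at h3
  simpa using h3

/-- identification of the standard word with the generator product -/
lemma finRange_eq_rung : (List.finRange m) = (Cword : W m) := by
  apply List.ext_getElem
  · simp [Cword, rung]
  · intro i h1 h2
    simp only [Cword, rung, Nat.sub_zero, List.getElem_map, List.getElem_range',
      List.getElem_finRange]
    apply Fin.ext
    simp only [List.length_finRange] at h1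
    rw [Fin.val_cast_of_lt]
    · simp
    · simpa [Cword, rung] using h2

lemma pi_Cword : pi (Cword : W m) = (List.ofFn (σ : Fin m → BraidGroup m)).prod := by
  rw [List.ofFn_eq_map, finRange_eq_rung]
  rfl

lemma pi_Cpow (k : ℕ) :
    pi (Cpow k : W m) = ((List.ofFn (σ : Fin m → BraidGroup m)).prod) ^ k := by
  induction k with
  | zero => simp [Cpow, pi]
  | succ k ih =>
    show pi ((Cword ++ Cpow k : W m)) = _
    rw [pi_append, pi_Cword, ih, ← pow_succ']

/-- Δ² is central -/
lemma deltaSq_central (g : BraidGroup m) :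
    g * pi (Cpow (m+1) : W m) = pi (Cpow (m+1) : W m) * g := by
  have hK : ∀ t : Fin m, σ t ∈ Subgroup.centralizer {pi (Cpow (m+1) : W m)} := by
    intro t
    rw [Subgroup.mem_centralizer_singleton_iff]
    have h1 : pi ((Cpow (m+1) : W m) ++ [t]) = pi (t :: Cpow (m+1)) :=
      pi_equiv (zcomm_letter t)
    rw [pi_append, pi_cons] at h1
    simpa [pi] using h1.symm
  have : (⊤ : Subgroup (BraidGroup m)) ≤ Subgroup.centralizer {pi (Cpow (m+1) : W m)} := by
    rw [← PresentedGroup.closure_range_of (braidRels m)]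
    rw [Subgroup.closure_le]
    rintro x ⟨t, rfl⟩
    exact hK t
  have hg := this (Subgroup.mem_top g)
  rw [Subgroup.mem_centralizer_singleton_iff] at hg
  exact hg

end WithNeZero


section Hurwitz
variable {G : Type*} [Group G]

lemma HE.refl (l : List G) : HurwitzEquiv l l := Relation.EqvGen.refl l

lemma HE.symm {l l' : List G} (h : HurwitzEquiv l l') : HurwitzEquiv l' l :=
  Relation.EqvGen.symm _ _ h

lemma HE.trans {l l' l'' : List G} (h1 : HurwitzEquiv l l') (h2 : HurwitzEquiv l' l'') :
    HurwitzEquiv l l'' := Relation.EqvGen.trans _ _ _ h1 h2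

lemma HE.of_move {l l' : List G} (h : HurwitzMove l l') : HurwitzEquiv l l' :=
  Relation.EqvGen.rel _ _ h

instance : Trans (HurwitzEquiv (G := G)) (HurwitzEquiv (G := G)) (HurwitzEquiv (G := G)) :=
  ⟨HE.trans⟩

lemma hmove_cons (x : G) {l l' : List G} (h : HurwitzMove l l') :
    HurwitzMove (x :: l) (x :: l') := by
  obtain ⟨u, v, a, c, rfl, rfl⟩ := h
  exact ⟨x :: u, v, a, c, rfl, rfl⟩

lemma HE.cons_congr (x : G) {l l' : List G} (h : HurwitzEquiv l l') :
    HurwitzEquiv (x :: l) (x :: l') := by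
  induction h with
  | rel _ _ h => exact HE.of_move (hmove_cons x h)
  | refl _ => exact HE.refl _
  | symm _ _ _ ih => exact HE.symm ih
  | trans _ _ _ _ _ ih1 ih2 => exact HE.trans ih1 ih2

lemma hmove_append_right (s : List G) {l l' : List G} (h : HurwitzMove l l') :
    HurwitzMove (l ++ s) (l' ++ s) := by
  obtain ⟨u, v, a, c, rfl, rfl⟩ := h
  exact ⟨u, v ++ s, a, c, by simp, by simp⟩

lemma HE.append_right (s : List G) {l l' : List G} (h : HurwitzEquiv l l') :
    HurwitzEquiv (l ++ s) (l' ++ s) := by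
  induction h with
  | rel _ _ h => exact HE.of_move (hmove_append_right s h)
  | refl _ => exact HE.refl _
  | symm _ _ _ ih => exact HE.symm ih
  | trans _ _ _ _ _ ih1 ih2 => exact HE.trans ih1 ih2

lemma HE.append_left (p : List G) {l l' : List G} (h : HurwitzEquiv l l') :
    HurwitzEquiv (p ++ l) (p ++ l') := by
  induction p with
  | nil => simpa using h
  | cons x p ih => exact HE.cons_congr x ih

lemma hur_swap {x y : G} (h : x * y = y * x) (t : List G) :
    HurwitzEquiv (x :: y :: t) (y :: x :: t) := by
  have e : x * y * x⁻¹ = y := by rw [h, mul_inv_cancel_right]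
  have hm : HurwitzEquiv (x :: y :: t) ((x * y * x⁻¹) :: x :: t) :=
    HE.of_move ⟨[], t, x, y, rfl, rfl⟩
  rwa [e] at hm

lemma hur_braid {x y : G} (h : x * y * x = y * x * y) (t : List G) :
    HurwitzEquiv (x :: y :: x :: t) (y :: x :: y :: t) := by
  have e : x * (y * x * y⁻¹) * x⁻¹ = y := by
    have e1 : x * (y * x * y⁻¹) * x⁻¹ = (x * y * x) * y⁻¹ * x⁻¹ := by group
    rw [e1, h]
    group
  have m1 : HurwitzMove (x :: y :: x :: t) (x :: (y * x * y⁻¹) :: y :: t) :=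
    hmove_cons x ⟨[], t, y, x, rfl, rfl⟩
  have m2 : HurwitzEquiv (x :: (y * x * y⁻¹) :: y :: t)
      ((x * (y * x * y⁻¹) * x⁻¹) :: x :: y :: t) :=
    HE.of_move ⟨[], y :: t, x, y * x * y⁻¹, rfl, rfl⟩
  rw [e] at m2
  exact HE.trans (HE.of_move m1) m2

lemma hmove_conj (g : G) {l l' : List G} (h : HurwitzMove l l') :
    HurwitzMove (l.map fun x => g * x * g⁻¹) (l'.map fun x => g * x * g⁻¹) := by
  obtain ⟨u, v, a, c, rfl, rfl⟩ := h
  refine ⟨u.map fun x => g * x * g⁻¹, v.map fun x => g * x * g⁻¹,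
    g * a * g⁻¹, g * c * g⁻¹, by simp, ?_⟩
  have e : g * (a * c * a⁻¹) * g⁻¹ = (g * a * g⁻¹) * (g * c * g⁻¹) * (g * a * g⁻¹)⁻¹ := by
    group
  simp [e]

lemma hequiv_conj (g : G) {l l' : List G} (h : HurwitzEquiv l l') :
    HurwitzEquiv (l.map fun x => g * x * g⁻¹) (l'.map fun x => g * x * g⁻¹) := by
  induction h with
  | rel _ _ h => exact HE.of_move (hmove_conj g h)
  | refl _ => exact HE.refl _
  | symm _ _ _ ih => exact HE.symm ih
  | trans _ _ _ _ _ ih1 ih2 => exact HE.trans ih1 ih2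

lemma hur_slide (T : List G) (c : G) :
    HurwitzEquiv (T ++ [c]) (c :: T.map fun x => c⁻¹ * x * c) := by
  induction T with
  | nil => exact HE.refl _
  | cons t T ih =>
    have step : HurwitzMove (c :: (c⁻¹ * t * c) :: T.map fun x => c⁻¹ * x * c)
        (t :: c :: T.map fun x => c⁻¹ * x * c) := by
      have e : c * (c⁻¹ * t * c) * c⁻¹ = t := by group
      have hm : HurwitzMove (c :: (c⁻¹ * t * c) :: T.map fun x => c⁻¹ * x * c)
          ((c * (c⁻¹ * t * c) * c⁻¹) :: c :: T.map fun x => c⁻¹ * x * c) :=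
        ⟨[], T.map fun x => c⁻¹ * x * c, c, c⁻¹ * t * c, rfl, rfl⟩
      rwa [e] at hm
    have h1 : HurwitzEquiv (t :: (T ++ [c])) (t :: c :: T.map fun x => c⁻¹ * x * c) :=
      HE.cons_congr t ih
    exact HE.trans h1 (HE.symm (HE.of_move step))

lemma map_conj_comp (g h : G) (l : List G) :
    (l.map fun x => h * x * h⁻¹).map (fun x => g * x * g⁻¹)
      = l.map fun x => (g * h) * x * (g * h)⁻¹ := by
  induction l with
  | nil => rfl
  | cons x l ih =>
    simp only [List.map_cons, ih]
    congr 1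
    group

lemma map_conj_inv_cancel (g : G) (l : List G) :
    (l.map fun x => g * x * g⁻¹).map (fun x => g⁻¹ * x * g⁻¹⁻¹) = l := by
  induction l with
  | nil => rfl
  | cons x l ih =>
    simp only [List.map_cons, ih]
    congr 1
    group

lemma map_conj_inv_cancel' (g : G) (l : List G) :
    (l.map fun x => g * x * g⁻¹).map (fun x => g⁻¹ * x * g) = l := by
  induction l with
  | nil => rfl
  | cons x l ih =>
    simp only [List.map_cons, ih]
    congr 1
    group

lemma conj_prod (g : G) (l : List G) :
    (l.map fun x => g * x * g⁻¹).prod = g * l.prod * g⁻¹ := by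
  induction l with
  | nil => simp
  | cons x l ih =>
    rw [List.map_cons, List.prod_cons, ih, List.prod_cons]
    group

end Hurwitz


end BraidAux
namespace BraidAux
open List

variable {m : ℕ}

lemma bstep_hur {u v : W m} (h : BStep u v) :
    HurwitzEquiv (u.map σ) (v.map σ) := by
  obtain ⟨x, y, p, q, hpq, rfl, rfl⟩ := h.decomp
  have core : ∀ {p q : W m}, Brel p q → HurwitzEquiv (p.map σ) (q.map σ) := by
    intro p q h
    cases h with
    | far a b hab => exact hur_swap (sigma_far hab) []
    | braid a b hab => exact hur_braid (sigma_braid hab) []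
  have core' : HurwitzEquiv (p.map σ) (q.map σ) := by
    rcases hpq with h | h
    · exact core h
    · exact HE.symm (core h)
  simp only [List.map_append, List.append_assoc]
  exact HE.append_left _ (HE.append_right _ core')

lemma bequiv_hur {u v : W m} (h : BEquiv u v) :
    HurwitzEquiv (u.map σ) (v.map σ) := by
  induction h with
  | refl => exact HE.refl _
  | tail _ h2 ih => exact HE.trans ih (bstep_hur h2)

section FinalNZ
variable [NeZero m]

lemma base_K (t : Fin m) :
    HurwitzEquiv (((Cpow (m+1) : W m).map σ).map fun x => σ t * x * (σ t)⁻¹)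
      ((Cpow (m+1) : W m).map σ) := by
  obtain ⟨V, hV⟩ := rdiv t
  have h1 : HurwitzEquiv ((Cpow (m+1) : W m).map σ) ((V.map σ) ++ [σ t]) := by
    have := bequiv_hur hV
    simpa using this
  have h2 := hequiv_conj (σ t) h1
  have e2 : (((V.map σ) ++ [σ t]).map fun x => σ t * x * (σ t)⁻¹)
      = ((V.map σ).map fun x => σ t * x * (σ t)⁻¹) ++ [σ t] := by
    simp only [List.map_append, List.map_cons, List.map_nil, mul_inv_cancel_right]
  rw [e2] at h2
  have h3 := hur_slide ((V.map σ).map fun x => σ t * x * (σ t)⁻¹) (σ t)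
  have e4 : (((V.map σ).map fun x => σ t * x * (σ t)⁻¹).map
      fun x => (σ t)⁻¹ * x * (σ t)) = V.map σ := map_conj_inv_cancel' (σ t) (V.map σ)
  rw [e4] at h3
  have h5 : BEquiv ((t :: V : W m)) (Cpow (m+1)) := by
    apply pi_inj
    have hVpi : pi (V ++ [t] : W m) = pi (Cpow (m+1) : W m) := (pi_equiv hV).symm
    rw [pi_append] at hVpi
    have : pi ([t] : W m) = σ t := by simp [pi]
    rw [this] at hVpi
    have : pi ((t :: V : W m)) = σ t * pi V := pi_cons t V
    rw [this]
    have hc := deltaSq_central (m := m) (σ t)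
    calc σ t * pi V = σ t * (pi V * σ t) * (σ t)⁻¹ := by group
      _ = σ t * pi (Cpow (m+1) : W m) * (σ t)⁻¹ := by rw [hVpi]
      _ = pi (Cpow (m+1) : W m) * σ t * (σ t)⁻¹ := by rw [← hc]
      _ = pi (Cpow (m+1) : W m) := by group
  have h6 : HurwitzEquiv (σ t :: V.map σ) ((Cpow (m+1) : W m).map σ) := bequiv_hur h5
  exact HE.trans (HE.trans h2 h3) h6

lemma K_all (g : BraidGroup m) :
    HurwitzEquiv (((Cpow (m+1) : W m).map σ).map fun x => g * x * g⁻¹)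
      ((Cpow (m+1) : W m).map σ) := by
  set S0 : List (BraidGroup m) := (Cpow (m+1) : W m).map σ with hS0
  let Kgrp : Subgroup (BraidGroup m) :=
  { carrier := {g | HurwitzEquiv (S0.map fun x => g * x * g⁻¹) S0}
    one_mem' := by
      show HurwitzEquiv (S0.map fun x => (1 : BraidGroup m) * x * 1⁻¹) S0
      simpa using HE.refl S0
    mul_mem' := by
      intro g h hg hh
      show HurwitzEquiv (S0.map fun x => (g * h) * x * (g * h)⁻¹) S0
      rw [← map_conj_comp g h S0]
      exact HE.trans (hequiv_conj g hh) hg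
    inv_mem' := by
      intro g hg
      show HurwitzEquiv (S0.map fun x => g⁻¹ * x * g⁻¹⁻¹) S0
      have h1 := hequiv_conj g⁻¹ (HE.symm hg)
      rwa [map_conj_inv_cancel g S0] at h1 }
  have hgen : ∀ t : Fin m, σ t ∈ Kgrp := fun t => base_K t
  have htop : (⊤ : Subgroup (BraidGroup m)) ≤ Kgrp := by
    rw [← PresentedGroup.closure_range_of (braidRels m), Subgroup.closure_le]
    rintro x ⟨t, rfl⟩
    exact hgen t
  exact htop (Subgroup.mem_top g)

end FinalNZ
end BraidAux

open BraidAux in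
/-- (Main theorem) Let `Hᵢ = a σᵢ a⁻¹` and `Fᵢ = b σᵢ b⁻¹` be two conjugate
frames of `Bₙ`. Any two factorizations of `Δₙ²` into elements of these frames
are Hurwitz equivalent. -/
theorem hurwitz_equiv_frame_factorizations {n : ℕ} (hn : 2 ≤ n)
    (a b : BraidGroup (n - 1))
    (i j : Fin (n * (n - 1)) → Fin (n - 1))
    (hF : (List.ofFn fun k => b * σ (i k) * b⁻¹).prod = DeltaSq n)
    (hH : (List.ofFn fun k => a * σ (j k) * a⁻¹).prod = DeltaSq n) :
    HurwitzEquiv (List.ofFn fun k => b * σ (i k) * b⁻¹)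
      (List.ofFn fun k => a * σ (j k) * a⁻¹) := by
  haveI : NeZero (n - 1) := ⟨by omega⟩
  have hDe : DeltaSq n = pi (Cpow ((n-1)+1) : W (n-1)) := by
    rw [pi_Cpow, show (n-1)+1 = n from by omega]
    rfl
  have eF : (List.ofFn fun k => b * σ (i k) * b⁻¹)
      = ((List.ofFn i).map σ).map (fun x => b * x * b⁻¹) := by
    rw [List.map_ofFn, List.map_ofFn]
    rfl
  have eH : (List.ofFn fun k => a * σ (j k) * a⁻¹)
      = ((List.ofFn j).map σ).map (fun x => a * x * a⁻¹) := by
    rw [List.map_ofFn, List.map_ofFn]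
    rfl
  have hFp : b * pi (List.ofFn i) * b⁻¹ = DeltaSq n := by
    rw [eF, conj_prod] at hF
    exact hF
  have hHp : a * pi (List.ofFn j) * a⁻¹ = DeltaSq n := by
    rw [eH, conj_prod] at hH
    exact hH
  have hLi : pi (List.ofFn i) = pi (Cpow ((n-1)+1) : W (n-1)) := by
    have h1 : pi (List.ofFn i) = b⁻¹ * (b * pi (List.ofFn i) * b⁻¹) * b := by group
    rw [h1, hFp, hDe, deltaSq_central b⁻¹]
    group
  have hLj : pi (List.ofFn j) = pi (Cpow ((n-1)+1) : W (n-1)) := by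
    have h1 : pi (List.ofFn j) = a⁻¹ * (a * pi (List.ofFn j) * a⁻¹) * a := by group
    rw [h1, hHp, hDe, deltaSq_central a⁻¹]
    group
  rw [eF, eH]
  have c1 : HurwitzEquiv (((List.ofFn i).map σ).map fun x => b * x * b⁻¹)
      (((Cpow ((n-1)+1) : W (n-1)).map σ).map fun x => b * x * b⁻¹) :=
    hequiv_conj b (bequiv_hur (pi_inj hLi))
  have c2 := K_all (m := n-1) b
  have c3 := HE.symm (K_all (m := n-1) a)
  have c4 : HurwitzEquiv (((Cpow ((n-1)+1) : W (n-1)).map σ).map fun x => a * x * a⁻¹)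
      (((List.ofFn j).map σ).map fun x => a * x * a⁻¹) :=
    hequiv_conj a (HE.symm (bequiv_hur (pi_inj hLj)))
  exact HE.trans (HE.trans (HE.trans c1 c2) c3) c4
end

section
/- (Garside normal form) Let n ≥ 2 and let σ_1,…,σ_{n−1} be the standard Artin generators of B_n, and let Δ_n = (σ_1)(σ_2σ_1)(σ_3σ_2σ_1)⋯(σ_{n−1}σ_{n−2}⋯σ_1) be the Garside half-twist element. Then every braid P ∈ B_n can be written as P = Δ_n^r · Q where r is an integer and Q is a positive braid, i.e. a (possibly empty) product of the generators σ_1,…,σ_{n−1} with positive exponents only. -/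
/-- The Garside half-twist `Δₙ = (σ₁)(σ₂σ₁)(σ₃σ₂σ₁)⋯(σₙ₋₁σₙ₋₂⋯σ₁)`
(zero-based: block `i` is `σᵢ σᵢ₋₁ ⋯ σ₀`). -/
def Delta (n : ℕ) : BraidGroup (n - 1) :=
  (List.ofFn fun i : Fin (n - 1) =>
    (List.ofFn fun k : Fin (i.val + 1) =>
      σ (⟨i.val - k.val, lt_of_le_of_lt (Nat.sub_le _ _) i.isLt⟩ : Fin (n - 1))).prod).prod

namespace Garside
variable {m : ℕ}

lemma rel_one {r : FreeGroup (Fin m)} (h : r ∈ braidRels m) :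
    PresentedGroup.mk (braidRels m) r = 1 :=
  (QuotientGroup.eq_one_iff r).mpr (Subgroup.subset_normalClosure h)

lemma braid_comm {i j : Fin m} (h : i.val + 2 ≤ j.val) : σ i * σ j = σ j * σ i := by
  have := rel_one (Or.inl ⟨i, j, h, rfl⟩)
  simp only [map_mul, map_inv] at this
  have h2 : (PresentedGroup.mk (braidRels m)) (FreeGroup.of i) = σ i := rfl
  have h3 : (PresentedGroup.mk (braidRels m)) (FreeGroup.of j) = σ j := rfl
  rw [h2, h3, mul_inv_eq_one] at this
  exact this

lemma braid_adj {i j : Fin m} (h : i.val + 1 = j.val) :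
    σ i * σ j * σ i = σ j * σ i * σ j := by
  have := rel_one (Or.inr ⟨i, j, h, rfl⟩)
  simp only [map_mul, map_inv] at this
  have h2 : (PresentedGroup.mk (braidRels m)) (FreeGroup.of i) = σ i := rfl
  have h3 : (PresentedGroup.mk (braidRels m)) (FreeGroup.of j) = σ j := rfl
  rw [h2, h3, mul_inv_eq_one] at this
  exact this

/-- Total version of the generators. -/
def σ' (i : ℕ) : BraidGroup m := if h : i < m then σ ⟨i, h⟩ else 1

lemma σ'_eq {i : ℕ} (h : i < m) : (σ' i : BraidGroup m) = σ ⟨i, h⟩ := dif_pos h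

lemma σcomm {i j : ℕ} (h : i + 2 ≤ j) (hj : j < m) :
    (σ' i : BraidGroup m) * σ' j = σ' j * σ' i := by
  have hi : i < m := by omega
  rw [σ'_eq hi, σ'_eq hj]
  exact braid_comm h

lemma σbraid {i : ℕ} (h : i + 1 < m) :
    (σ' i : BraidGroup m) * σ' (i + 1) * σ' i = σ' (i + 1) * σ' i * σ' (i + 1) := by
  rw [σ'_eq (by omega : i < m), σ'_eq h]
  exact braid_adj rfl

end Garside

namespace Garside
variable {m : ℕ}

lemma swapl {G : Type*} [Group G] {a b c : G} (h : a * b = b * c) (d : G) :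
    a * (b * d) = b * (c * d) := by rw [← mul_assoc, h, mul_assoc]

/-- descending word `σ'_{s+l-1} ⋯ σ'_s`. -/
def dw : ℕ → ℕ → BraidGroup m
  | _, 0 => 1
  | s, (l+1) => σ' (s + l) * dw s l

/-- ascending word `σ'_s ⋯ σ'_{s+l-1}`. -/
def aw : ℕ → ℕ → BraidGroup m
  | _, 0 => 1
  | s, (l+1) => aw s l * σ' (s + l)

lemma dw_succ (s l : ℕ) : (dw s (l+1) : BraidGroup m) = σ' (s + l) * dw s l := rfl
lemma aw_succ (s l : ℕ) : (aw s (l+1) : BraidGroup m) = aw s l * σ' (s + l) := rfl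

lemma dw_succ' (s l : ℕ) : (dw s (l+1) : BraidGroup m) = dw (s+1) l * σ' s := by
  induction l generalizing s with
  | zero => simp [dw]
  | succ l ih =>
      rw [dw_succ, ih, dw_succ, mul_assoc, show s + 1 + l = s + (l + 1) by omega]

lemma comm_dw {s l j : ℕ} (h : s + l + 1 ≤ j) (hj : j < m) :
    (σ' j : BraidGroup m) * dw s l = dw s l * σ' j := by
  induction l with
  | zero => simp [dw]
  | succ l ih =>
      rw [dw_succ, swapl (σcomm (by omega) hj).symm, ih (by omega), mul_assoc]

lemma comm_aw {s l j : ℕ} (h : s + l + 1 ≤ j) (hj : j < m) :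
    (σ' j : BraidGroup m) * aw s l = aw s l * σ' j := by
  induction l with
  | zero => simp [aw]
  | succ l ih =>
      rw [aw_succ, ← mul_assoc, ih (by omega), mul_assoc,
        ← σcomm (by omega) hj, ← mul_assoc]

lemma lemA {s i l : ℕ} (h1 : s ≤ i) (h2 : i + 2 ≤ s + l) (h3 : s + l ≤ m) :
    (dw s l : BraidGroup m) * σ' (i+1) = σ' i * dw s l := by
  induction l with
  | zero => omega
  | succ l ih =>
      by_cases hc : i + 2 ≤ s + l
      · rw [dw_succ, mul_assoc, ih hc (by omega),
          swapl (σcomm (show i + 2 ≤ s + l by omega) (by omega)).symm]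
      · have hsl : s + l = i + 1 := by omega
        obtain ⟨l', rfl⟩ : ∃ l', l = l' + 1 := ⟨l - 1, by omega⟩
        have hsl' : s + l' = i := by omega
        have him : i + 1 < m := by omega
        have hcd : (σ' (i+1) : BraidGroup m) * dw s l' = dw s l' * σ' (i+1) :=
          comm_dw (by omega) him
        rw [dw_succ, dw_succ, hsl', hsl]
        calc σ' (i+1) * (σ' i * dw s l') * σ' (i+1)
            = σ' (i+1) * σ' i * (dw s l' * σ' (i+1)) := by
              simp only [mul_assoc]
          _ = σ' (i+1) * σ' i * (σ' (i+1) * dw s l') := by rw [hcd]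
          _ = σ' (i+1) * σ' i * σ' (i+1) * dw s l' := by
              simp only [mul_assoc]
          _ = σ' i * σ' (i+1) * σ' i * dw s l' := by rw [← σbraid him]
          _ = σ' i * (σ' (i+1) * (σ' i * dw s l')) := by
              simp only [mul_assoc]

lemma lemA' {s i l : ℕ} (h1 : s ≤ i) (h2 : i + 2 ≤ s + l) (h3 : s + l ≤ m) :
    (aw s l : BraidGroup m) * σ' i = σ' (i+1) * aw s l := by
  induction l with
  | zero => omega
  | succ l ih =>
      by_cases hc : i + 2 ≤ s + l
      · rw [aw_succ, mul_assoc, ← σcomm (show i + 2 ≤ s + l by omega) (by omega),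
          ← mul_assoc, ih hc (by omega), mul_assoc]
      · have hsl : s + l = i + 1 := by omega
        obtain ⟨l', rfl⟩ : ∃ l', l = l' + 1 := ⟨l - 1, by omega⟩
        have hsl' : s + l' = i := by omega
        have him : i + 1 < m := by omega
        have hca : (σ' (i+1) : BraidGroup m) * aw s l' = aw s l' * σ' (i+1) :=
          comm_aw (by omega) him
        rw [aw_succ, aw_succ, hsl', hsl]
        calc aw s l' * σ' i * σ' (i+1) * σ' i
            = aw s l' * (σ' i * σ' (i+1) * σ' i) := by
              simp only [mul_assoc]
          _ = aw s l' * (σ' (i+1) * σ' i * σ' (i+1)) := by rw [σbraid him]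
          _ = aw s l' * σ' (i+1) * (σ' i * σ' (i+1)) := by
              simp only [mul_assoc]
          _ = σ' (i+1) * aw s l' * (σ' i * σ' (i+1)) := by rw [← hca]
          _ = σ' (i+1) * (aw s l' * σ' i * σ' (i+1)) := by
              simp only [mul_assoc]

lemma lemD {c l s L : ℕ} (h1 : s ≤ c) (h2 : c + l + 1 ≤ s + L) (h3 : s + L ≤ m) :
    (dw c l : BraidGroup m) * dw s L = dw s L * dw (c+1) l := by
  induction l with
  | zero => simp [dw]
  | succ l ih =>
      rw [dw_succ, mul_assoc, ih (by omega),
        swapl (lemA (show s ≤ c + l by omega) (by omega) h3).symm,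
        show c + l + 1 = c + 1 + l by omega, ← dw_succ]

/-- `Δd s k` : half twist on generators `σ'_s, …, σ'_{s+k-1}`. -/
def Δd (s : ℕ) : ℕ → BraidGroup m
  | 0 => 1
  | (k+1) => Δd s k * dw s (k+1)

lemma Δd_succ (s k : ℕ) : (Δd s (k+1) : BraidGroup m) = Δd s k * dw s (k+1) := rfl

lemma shift {s k L : ℕ} (h : k + 1 ≤ L) (h3 : s + L ≤ m) :
    (Δd s k : BraidGroup m) * dw s L = dw s L * Δd (s+1) k := by
  induction k with
  | zero => simp [Δd]
  | succ k ih =>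
      rw [Δd_succ, mul_assoc, lemD le_rfl (by omega) h3, ← mul_assoc,
        ih (by omega), mul_assoc, ← Δd_succ]

lemma factor2 {s k : ℕ} (h : s + k + 1 ≤ m) :
    (Δd s (k+1) : BraidGroup m) = dw s (k+1) * Δd (s+1) k := by
  rw [Δd_succ, shift le_rfl (by omega)]

lemma factorA {s k : ℕ} (h : s + k + 1 ≤ m) :
    (Δd s (k+1) : BraidGroup m) = aw s (k+1) * Δd s k := by
  induction k with
  | zero => simp [Δd, dw, aw]
  | succ k ih =>
      calc (Δd s (k+2) : BraidGroup m) = Δd s (k+1) * dw s (k+2) := rfl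
        _ = aw s (k+1) * Δd s k * dw s (k+2) := by rw [ih (by omega)]
        _ = aw s (k+1) * (dw s (k+2) * Δd (s+1) k) := by
            rw [mul_assoc, shift (by omega) (by omega)]
        _ = aw s (k+1) * (σ' (s + (k+1)) * dw s (k+1) * Δd (s+1) k) := by rw [dw_succ]
        _ = (aw s (k+1) * σ' (s + (k+1))) * (dw s (k+1) * Δd (s+1) k) := by
            simp only [mul_assoc]
        _ = aw s (k+2) * Δd s (k+1) := by rw [← aw_succ, ← factor2 (by omega)]

lemma conj_gen {s k j t : ℕ} (hk : j + t + 1 = k) (h : s + k ≤ m) :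
    (Δd s k : BraidGroup m) * σ' (s + j) = σ' (s + t) * Δd s k := by
  induction k generalizing s j t with
  | zero => omega
  | succ k ih =>
      match j, t with
      | 0, 0 =>
          have : k = 0 := by omega
          subst this
          simp [Δd, dw]
      | 0, (t+1) =>
          rw [factorA (by omega), mul_assoc, ih (show 0 + t + 1 = k by omega) (by omega),
            ← mul_assoc, lemA' (by omega) (by omega) (by omega), mul_assoc,
            show s + t + 1 = s + (t+1) by omega]
      | (j+1), t =>
          rw [Δd_succ, mul_assoc, show s + (j+1) = (s+j) + 1 by omega,
            lemA (by omega) (by omega) (by omega), ← mul_assoc,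
            ih (show j + t + 1 = k by omega) (by omega), mul_assoc]

end Garside

namespace Garside
variable {m : ℕ}

lemma pos_mul {x y : BraidGroup m} {w v : List (Fin m)}
    (hx : x = (w.map σ).prod) (hy : y = (v.map σ).prod) :
    x * y = (((w ++ v).map σ).prod) := by
  rw [hx, hy, List.map_append, List.prod_append]

lemma pos_dw {s l : ℕ} (h : s + l ≤ m) :
    ∃ w : List (Fin m), (dw s l : BraidGroup m) = (w.map σ).prod := by
  induction l with
  | zero => exact ⟨[], rfl⟩
  | succ l ih =>
      obtain ⟨w, hw⟩ := ih (by omega)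
      exact ⟨⟨s + l, by omega⟩ :: w, by
        rw [dw_succ, hw, List.map_cons, List.prod_cons, σ'_eq (by omega)]⟩

lemma pos_Δd {s k : ℕ} (h : s + k ≤ m) :
    ∃ w : List (Fin m), (Δd s k : BraidGroup m) = (w.map σ).prod := by
  induction k with
  | zero => exact ⟨[], rfl⟩
  | succ k ih =>
      obtain ⟨w, hw⟩ := ih (by omega)
      obtain ⟨v, hv⟩ := pos_dw (show s + (k+1) ≤ m by omega)
      exact ⟨w ++ v, by rw [Δd_succ, pos_mul hw hv]⟩

lemma ends {s k j : ℕ} (hj : j < k) (h : s + k ≤ m) :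
    ∃ w : List (Fin m), (Δd s k : BraidGroup m) = (w.map σ).prod * σ' (s + j) := by
  induction k generalizing s j with
  | zero => omega
  | succ k ih =>
      match j with
      | 0 =>
          obtain ⟨w1, hw1⟩ := pos_Δd (show s + k ≤ m by omega)
          obtain ⟨w2, hw2⟩ := pos_dw (show (s+1) + k ≤ m by omega)
          refine ⟨w1 ++ w2, ?_⟩
          rw [Δd_succ, dw_succ', ← mul_assoc, pos_mul hw1 hw2, Nat.add_zero]
      | (j+1) =>
          have hk : 0 < k := by omega
          obtain ⟨w1, hw1⟩ := pos_dw (show s + (k+1) ≤ m by omega)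
          obtain ⟨w2, hw2⟩ := ih (s := s+1) (j := j) (by omega) (by omega)
          refine ⟨w1 ++ w2, ?_⟩
          rw [factor2 (by omega), hw2, ← mul_assoc, pos_mul hw1 rfl,
            show s + 1 + j = s + (j + 1) by omega]

end Garside

namespace Garside
variable {m : ℕ}

lemma σ'_fin (j : Fin m) : (σ' j.val : BraidGroup m) = σ j := σ'_eq j.isLt

/-- index reversal `i ↦ m - 1 - i`. -/
def rev (j : Fin m) : Fin m := ⟨m - 1 - j.val, by omega⟩

lemma rev_rev (j : Fin m) : rev (rev j) = j := by
  apply Fin.ext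
  have := j.isLt
  simp only [rev]
  omega

lemma Δσ (j : Fin m) : (Δd 0 m : BraidGroup m) * σ j = σ (rev j) * Δd 0 m := by
  have hj := j.isLt
  have hk' : j.val + (m - 1 - j.val) + 1 = m := by omega
  have hm' : 0 + m ≤ m := by omega
  have e1 : (σ' (0 + j.val) : BraidGroup m) = σ j := by
    rw [Nat.zero_add]; exact σ'_fin j
  have e2 : (σ' (0 + (m - 1 - j.val)) : BraidGroup m) = σ (rev j) := by
    rw [Nat.zero_add, σ'_eq (show m - 1 - j.val < m by omega)]; rfl
  have h := conj_gen hk' hm'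
  rw [e1, e2] at h
  exact h

lemma σΔ (j : Fin m) : σ j * (Δd 0 m : BraidGroup m) = Δd 0 m * σ (rev j) := by
  have h := Δσ (rev j)
  rw [rev_rev] at h
  exact h.symm

lemma σΔinv (j : Fin m) :
    σ j * (Δd 0 m : BraidGroup m)⁻¹ = (Δd 0 m)⁻¹ * σ (rev j) := by
  have h := Δσ j
  have h2 := congrArg (fun x => (Δd 0 m)⁻¹ * x * (Δd 0 m)⁻¹) h
  simpa [mul_assoc] using h2

lemma conj_word (w : List (Fin m)) :
    (w.map σ).prod * (Δd 0 m : BraidGroup m) = Δd 0 m * ((w.map rev).map σ).prod := by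
  induction w with
  | nil => simp
  | cons a w ih =>
      simp only [List.map_cons, List.prod_cons]
      rw [mul_assoc, ih, ← mul_assoc, σΔ, mul_assoc]

lemma conj_word_inv (w : List (Fin m)) :
    (w.map σ).prod * (Δd 0 m : BraidGroup m)⁻¹ =
      (Δd 0 m)⁻¹ * ((w.map rev).map σ).prod := by
  induction w with
  | nil => simp
  | cons a w ih =>
      simp only [List.map_cons, List.prod_cons]
      rw [mul_assoc, ih, ← mul_assoc, σΔinv, mul_assoc]

lemma conj_zpow (z : ℤ) (w : List (Fin m)) :
    ∃ v : List (Fin m),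
      (w.map σ).prod * (Δd 0 m : BraidGroup m) ^ z = (Δd 0 m) ^ z * (v.map σ).prod := by
  induction z using Int.induction_on generalizing w with
  | zero => exact ⟨w, by simp⟩
  | succ n ih =>
      obtain ⟨v, hv⟩ := ih w
      refine ⟨v.map rev, ?_⟩
      rw [zpow_add_one, ← mul_assoc, hv, mul_assoc, conj_word, ← mul_assoc,
        ← zpow_add_one]
  | pred n ih =>
      obtain ⟨v, hv⟩ := ih w
      refine ⟨v.map rev, ?_⟩
      rw [zpow_sub_one, ← mul_assoc, hv, mul_assoc, conj_word_inv, ← mul_assoc,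
        ← zpow_sub_one]

lemma ends_fin (j : Fin m) :
    ∃ w : List (Fin m), (Δd 0 m : BraidGroup m) = (w.map σ).prod * σ j := by
  obtain ⟨w, hw⟩ := ends (s := 0) j.isLt (show (0:ℕ) + m ≤ m by omega)
  have e1 : (σ' (0 + j.val) : BraidGroup m) = σ j := by
    rw [Nat.zero_add]; exact σ'_fin j
  rw [e1] at hw
  exact ⟨w, hw⟩

lemma block_eq : ∀ (i : ℕ) (h : i < m),
    (List.ofFn fun k : Fin (i+1) =>
      σ (⟨i - k.val, lt_of_le_of_lt (Nat.sub_le _ _) h⟩ : Fin m)).prod = dw 0 (i+1) := by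
  intro i
  induction i with
  | zero =>
      intro h
      simp [List.ofFn_succ, dw, σ'_eq h]
  | succ i ih =>
      intro h
      rw [List.ofFn_succ, List.prod_cons]
      have hfun : (List.ofFn fun k : Fin (i+1) =>
          σ (⟨i + 1 - (Fin.succ k).val, lt_of_le_of_lt (Nat.sub_le _ _) h⟩ : Fin m)) =
          (List.ofFn fun k : Fin (i+1) =>
          σ (⟨i - k.val, lt_of_le_of_lt (Nat.sub_le _ _) (by omega : i < m)⟩ : Fin m)) := by
        apply congrArg
        funext k
        apply congrArg
        apply Fin.ext
        simp only [Fin.val_succ]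
        omega
      rw [hfun, ih (by omega), dw_succ]
      congr 1
      rw [σ'_eq (show 0 + (i + 1) < m by omega)]
      apply congrArg
      apply Fin.ext
      simp

lemma ofFn_dw : ∀ (k : ℕ), k ≤ m →
    (List.ofFn fun i : Fin k => (dw 0 (i.val + 1) : BraidGroup m)).prod = Δd 0 k := by
  intro k
  induction k with
  | zero => intro _; rfl
  | succ k ih =>
      intro hk
      rw [List.ofFn_succ']
      simp only [Fin.coe_castSucc, Fin.val_last]
      rw [List.prod_concat, ih (by omega)]
      rfl

end Garside

/-- (Garside normal form) Every braid `P ∈ Bₙ` can be written as `Δₙʳ · Q`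
with `r ∈ ℤ` and `Q` a positive braid (a product of generators with positive
exponents only). -/
theorem garside_normal_form {n : ℕ} (hn : 2 ≤ n) (P : BraidGroup (n - 1)) :
    ∃ (r : ℤ) (w : List (Fin (n - 1))), P = Delta n ^ r * (w.map σ).prod := by
  have hD : Delta n = Garside.Δd 0 (n - 1) := by
    have h1 : Delta n = (List.ofFn fun i : Fin (n - 1) =>
        (Garside.dw 0 (i.val + 1) : BraidGroup (n - 1))).prod :=
      congrArg List.prod (congrArg List.ofFn
        (funext fun i => Garside.block_eq i.val i.isLt))
    rw [h1, Garside.ofFn_dw (n - 1) le_rfl]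
  rw [hD]
  obtain ⟨x, rfl⟩ := PresentedGroup.mk_surjective (braidRels (n - 1)) P
  induction x using FreeGroup.induction_on with
  | C1 => exact ⟨0, [], by simp⟩
  | of x =>
      refine ⟨0, [x], ?_⟩
      simp only [zpow_zero, one_mul, List.map_cons, List.map_nil, List.prod_cons,
        List.prod_nil, mul_one]
      rfl
  | inv_of x ih =>
      obtain ⟨w, hw⟩ := Garside.ends_fin (m := n - 1) x
      refine ⟨-1, w, ?_⟩
      have h1 : (PresentedGroup.mk (braidRels (n - 1)) (FreeGroup.of x)⁻¹ : BraidGroup (n - 1))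
          = (σ x)⁻¹ := by rw [map_inv]; rfl
      rw [h1, zpow_neg_one, hw, mul_inv_rev]
      simp [mul_assoc]
  | mul x y ihx ihy =>
      obtain ⟨r1, w1, h1⟩ := ihx
      obtain ⟨r2, w2, h2⟩ := ihy
      obtain ⟨v, hv⟩ := Garside.conj_zpow r2 w1
      refine ⟨r1 + r2, v ++ w2, ?_⟩
      rw [map_mul, h1, h2]
      calc Garside.Δd 0 (n-1) ^ r1 * (w1.map σ).prod
            * (Garside.Δd 0 (n-1) ^ r2 * (w2.map σ).prod)
          = Garside.Δd 0 (n-1) ^ r1 * ((w1.map σ).prod * Garside.Δd 0 (n-1) ^ r2)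
            * (w2.map σ).prod := by simp only [mul_assoc]
        _ = Garside.Δd 0 (n-1) ^ r1 * (Garside.Δd 0 (n-1) ^ r2 * (v.map σ).prod)
            * (w2.map σ).prod := by rw [hv]
        _ = Garside.Δd 0 (n-1) ^ (r1 + r2) * (((v ++ w2).map σ).prod) := by
            rw [zpow_add, List.map_append, List.prod_append]
            simp only [mul_assoc]
end
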